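/- arXiv:1001.3655 — 7 statements merged into one kernel-verified Lean document; each statement's English description precedes it below -/
import Mathlib

section
/- For every k ∈ ℕ, the image under the Jamiołkowski isomorphism J of the set of k-positive linear maps on L(V) equals the set of k-block positive operators on V⊗V. -/
open scoped ComplexOrder Kronecker
open Matrix

/-- Square complex matrices of size `n`, i.e. operators on `V = ℂ^n`. -/
abbrev Mat (n : ℕ) := Matrix (Fin n) (Fin n) ℂ

/-- Operators on `V ⊗ V`, identified with matrices indexed by pairs. -/
abbrev Mat2 (n : ℕ) := Matrix (Fin n × Fin n) (Fin n × Fin n) ℂ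

/-- Linear maps on `L(V)`. -/
abbrev MapV (n : ℕ) := Mat n →ₗ[ℂ] Mat n

variable {n : ℕ}

/-- The Jamiołkowski isomorphism `J(Φ) = (Φ ⊗ id)(|ω⟩⟨ω|)`, `ω = Σ_α e_α ⊗ e_α`,
written out in matrix entries: `J(Φ)_{(a,b),(c,d)} = Φ(E_{bd})_{ac}`. -/
def Jmat (Φ : MapV n) : Mat2 n :=
  Matrix.of fun p q => Φ (Matrix.single p.2 q.2 1) p.1 q.1

/-- The inverse of the Jamiołkowski isomorphism. -/
noncomputable def Jinv (A : Mat2 n) : MapV n where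
  toFun ξ := Matrix.of fun α β => ∑ γ, ∑ δ, ξ γ δ * A (α, γ) (β, δ)
  map_add' x y := by
    ext α β
    simp [Matrix.add_apply, add_mul, Finset.sum_add_distrib]
  map_smul' c x := by
    ext α β
    simp [Matrix.smul_apply, smul_eq_mul, Finset.mul_sum, mul_assoc]

/-- The circled product `A ⊙ B = J(J⁻¹(A) ∘ J⁻¹(B))`. -/
noncomputable def odot (A B : Mat2 n) : Mat2 n := Jmat (Jinv A ∘ₗ Jinv B)

/-- Tensor product of vectors of `V`, as a vector of `V ⊗ V`. -/
def vecTens (u v : Fin n → ℂ) : Fin n × Fin n → ℂ := fun p => u p.1 * v p.2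

/-- The maximally entangled (unnormalized) vector `ω = Σ_α e_α ⊗ e_α`. -/
def omegaVec (n : ℕ) : Fin n × Fin n → ℂ := fun p => if p.1 = p.2 then 1 else 0

/-- `A` is `k`-block positive: `⟨Σ u_i⊗v_i, A (Σ u_i⊗v_i)⟩ ≥ 0` for all `u, v`. -/
def IsKBlockPos (k : ℕ) (A : Mat2 n) : Prop :=
  ∀ u v : Fin k → (Fin n → ℂ),
    0 ≤ star (∑ i, vecTens (u i) (v i)) ⬝ᵥ A.mulVec (∑ i, vecTens (u i) (v i))

/-- `A` is `k`-entangled: it lies in the convex hull of the operators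
`|w⟩⟨w|` with `w = Σ_{i=1}^k u_i ⊗ v_i`. -/
def IsKEntangled (k : ℕ) (A : Mat2 n) : Prop :=
  A ∈ convexHull ℝ {M : Mat2 n | ∃ u v : Fin k → (Fin n → ℂ),
    M = Matrix.vecMulVec (∑ i, vecTens (u i) (v i)) (star (∑ i, vecTens (u i) (v i)))}

/-- The map `Φ ⊗ id_k` on `L(V ⊗ ℂ^k)` (as a plain function on matrices). -/
def tensorIdFun (k : ℕ) (Φ : MapV n) (M : Matrix (Fin n × Fin k) (Fin n × Fin k) ℂ) :
    Matrix (Fin n × Fin k) (Fin n × Fin k) ℂ :=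
  Matrix.of fun p q => Φ (Matrix.of fun a b => M (a, p.2) (b, q.2)) p.1 q.1

/-- `Φ` is `k`-positive: `Φ ⊗ id_k` maps positive semidefinite operators on
`V ⊗ ℂ^k` to positive semidefinite operators. -/
def IsKPos (k : ℕ) (Φ : MapV n) : Prop :=
  ∀ M : Matrix (Fin n × Fin k) (Fin n × Fin k) ℂ, M.PosSemidef → (tensorIdFun k Φ M).PosSemidef

/-- `Φ` is completely positive: `k`-positive for every `k`. -/
def IsCompPos (Φ : MapV n) : Prop := ∀ k, IsKPos k Φ

/-- `Φ` is `k`-superpositive: `Φ(ξ) = Σ_i X_i^* ξ X_i` with all `rank X_i ≤ k`. -/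
def IsKSuperPos (k : ℕ) (Φ : MapV n) : Prop :=
  ∃ (m : ℕ) (X : Fin m → Mat n), (∀ i, (X i).rank ≤ k) ∧
    ∀ ξ, Φ ξ = ∑ i, (X i)ᴴ * ξ * X i

/-- The Hilbert–Schmidt inner product on `L(L(V))`:
`(Φ|Ψ) = Σ_{α,β} (Φ(E_{αβ}) | Ψ(E_{αβ}))` over the matrix-unit orthonormal basis. -/
noncomputable def hsInnerMap (Φ Ψ : MapV n) : ℂ :=
  ∑ α : Fin n, ∑ β : Fin n,
    ((Φ (Matrix.single α β 1))ᴴ * Ψ (Matrix.single α β 1)).trace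

/-- The Hilbert–Schmidt trace of a map `Θ` on `L(V)`:
`Tr Θ = Σ_{α,β} (E_{αβ} | Θ(E_{αβ}))`. -/
noncomputable def mapTrace (Θ : MapV n) : ℂ :=
  ∑ α : Fin n, ∑ β : Fin n,
    ((Matrix.single α β (1 : ℂ))ᴴ * Θ (Matrix.single α β 1)).trace

/-- The adjoint of a map `Φ` on `L(V)` with respect to the Hilbert–Schmidt
inner product `(A|B) = Tr(A^* B)`. -/
noncomputable def hsAdj (Φ : MapV n) : MapV n where
  toFun ξ := ∑ γ : Fin n, ∑ δ : Fin n,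
    (((Φ (Matrix.single γ δ 1))ᴴ * ξ).trace) • Matrix.single γ δ 1
  map_add' x y := by
    simp [Matrix.mul_add, Matrix.trace_add, add_smul, Finset.sum_add_distrib]
  map_smul' c x := by
    simp [Matrix.mul_smul, Matrix.trace_smul, smul_smul, Finset.smul_sum]

/-- `Φ` belongs to `J⁻¹(H(V⊗V))`, i.e. `J(Φ)` is Hermitian. -/
def InJinvH (Φ : MapV n) : Prop := (Jmat Φ).IsHermitian

/-- Dual cone of a set of Hermitian operators on `V ⊗ V`, inside `H(V⊗V)`. -/
def hermDual (S : Set (Mat2 n)) : Set (Mat2 n) :=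
  {B | B.IsHermitian ∧ ∀ A ∈ S, 0 ≤ (A * B).trace}

/-- Dual cone of a set of maps, inside `J⁻¹(H(V⊗V))`, with respect to the
Hilbert–Schmidt inner product of maps. -/
def mapDual (S : Set (MapV n)) : Set (MapV n) :=
  {Ψ | InJinvH Ψ ∧ ∀ Φ ∈ S, 0 ≤ hsInnerMap Φ Ψ}

/-- Operators on `ℂ^h ⊗ ℂ^d`. -/
abbrev MatH (h d : ℕ) := Matrix (Fin h × Fin d) (Fin h × Fin d) ℂ

/-- `ρ` is a state: positive semidefinite with trace one. -/
def IsState {h d : ℕ} (ρ : MatH h d) : Prop := ρ.PosSemidef ∧ ρ.trace = 1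

/-- `ρ` can be written as a sum of `l` tensor products of positive semidefinite
operators. -/
def HasSepLen (h d : ℕ) (ρ : MatH h d) (l : ℕ) : Prop :=
  ∃ (A : Fin l → Matrix (Fin h) (Fin h) ℂ) (B : Fin l → Matrix (Fin d) (Fin d) ℂ),
    (∀ i, (A i).PosSemidef) ∧ (∀ i, (B i).PosSemidef) ∧ ρ = ∑ i, A i ⊗ₖ B i

/-- `ρ` is separable: a convex combination of tensor products of states. -/
def IsSepState (h d : ℕ) (ρ : MatH h d) : Prop :=
  ∃ (l : ℕ) (p : Fin l → ℝ) (A : Fin l → Matrix (Fin h) (Fin h) ℂ)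
    (B : Fin l → Matrix (Fin d) (Fin d) ℂ),
    (∀ i, 0 < p i) ∧ (∑ i, p i = 1) ∧
    (∀ i, (A i).PosSemidef ∧ (A i).trace = 1) ∧
    (∀ i, (B i).PosSemidef ∧ (B i).trace = 1) ∧
    ρ = ∑ i, (p i : ℂ) • (A i ⊗ₖ B i)

/-- The length of a separable state: the least `l` such that `ρ` is a sum of `l`
tensor products of positive semidefinite operators. -/
noncomputable def sepLength (h d : ℕ) (ρ : MatH h d) : ℕ := sInf {l | HasSepLen h d ρ l}

/-- `ρ` is a sum of `r` tensor products of Hermitian operators. -/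
def HasHermDecomp (h d : ℕ) (ρ : MatH h d) (r : ℕ) : Prop :=
  ∃ (A : Fin r → Matrix (Fin h) (Fin h) ℂ) (B : Fin r → Matrix (Fin d) (Fin d) ℂ),
    (∀ i, (A i).IsHermitian) ∧ (∀ i, (B i).IsHermitian) ∧ ρ = ∑ i, A i ⊗ₖ B i

/-- The Schmidt rank of `ρ`: the least `r` such that `ρ` is a sum of `r` tensor
products of Hermitian operators. -/
noncomputable def schmidtRank (h d : ℕ) (ρ : MatH h d) : ℕ := sInf {r | HasHermDecomp h d ρ r}

/-- The block `(⟨υ|⊗id) A (|υ⟩⊗id)` of an operator `A` on `V ⊗ V`. -/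
noncomputable def blockFst (A : Mat2 n) (υ : Fin n → ℂ) : Mat n :=
  Matrix.of fun β δ => ∑ α, ∑ γ, star (υ α) * A (α, β) (γ, δ) * υ γ

/-- The block `(id⊗⟨u|) A (id⊗|u⟩)` of an operator `A` on `V ⊗ V`. -/
noncomputable def blockSnd (A : Mat2 n) (u : Fin n → ℂ) : Mat n :=
  Matrix.of fun α γ => ∑ β, ∑ δ, star (u β) * A (α, β) (γ, δ) * u δ

/-- Real square matrices indexed by pairs: operators on `X ⊗ X`, `X = ℝ^n`. -/
abbrev RMat2 (n : ℕ) := Matrix (Fin n × Fin n) (Fin n × Fin n) ℝ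

/-- The partial transposition `(id ⊗ t) A` on operators on `X ⊗ X`. -/
def ptrans (A : RMat2 n) : RMat2 n := Matrix.of fun p q => A (p.1, q.2) (q.1, p.2)

/-- The quartic polynomial `Σ_{a,b,c,d} A_{ab,cd} x^a y^b x^c y^d` associated to
an operator on `X ⊗ X`; `x`-variables are indexed by `Sum.inl`, `y`-variables
by `Sum.inr`. -/
noncomputable def quarticPoly (A : RMat2 n) : MvPolynomial (Fin n ⊕ Fin n) ℝ :=
  ∑ a, ∑ b, ∑ c, ∑ e, MvPolynomial.C (A (a, b) (c, e)) *
    MvPolynomial.X (Sum.inl a) * MvPolynomial.X (Sum.inr b) *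
    MvPolynomial.X (Sum.inl c) * MvPolynomial.X (Sum.inr e)


lemma isHermitian_of_quad {m : Type*} [Fintype m] [DecidableEq m] (M : Matrix m m ℂ)
    (h : ∀ x : m → ℂ, (starRingEnd ℂ) (star x ⬝ᵥ M.mulVec x) = star x ⬝ᵥ M.mulVec x) :
    M.IsHermitian := by
  rw [← Matrix.isSymmetric_toEuclideanLin_iff, LinearMap.isSymmetric_iff_inner_map_self_real]
  intro v
  obtain ⟨x, rfl⟩ := (WithLp.equiv 2 (m → ℂ)).symm.surjective v
  simp only [WithLp.equiv_symm_apply, Matrix.toEuclideanLin_toLp, EuclideanSpace.inner_toLp_toLp,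
    Matrix.toLin'_apply]
  have := h x
  have key : star (M *ᵥ x) ⬝ᵥ x = (starRingEnd ℂ) (star x ⬝ᵥ M *ᵥ x) := by
    simp [dotProduct, map_sum, _root_.map_mul, mul_comm]
  rw [dotProduct_comm, key, this, this]

lemma apply_expand {n : ℕ} (Φ : MapV n) (B : Mat n) (a c : Fin n) :
    Φ B a c = ∑ b, ∑ e, B b e * Φ (Matrix.single b e 1) a c := by
  conv_lhs => rw [Matrix.matrix_eq_sum_single B]
  rw [map_sum]
  simp only [Matrix.sum_apply]
  refine Finset.sum_congr rfl fun b _ => ?_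
  rw [map_sum]
  simp only [Matrix.sum_apply]
  refine Finset.sum_congr rfl fun e _ => ?_
  have h1 : Matrix.single b e (B b e) = (B b e) • Matrix.single b e (1:ℂ) := by
    rw [Matrix.smul_single, smul_eq_mul, mul_one]
  rw [h1, _root_.map_smul, Matrix.smul_apply, smul_eq_mul]

lemma Jmat_Jinv {n : ℕ} (A : Mat2 n) : Jmat (Jinv A) = A := by
  ext ⟨a, b⟩ ⟨c, e⟩
  simp [Jmat, Jinv, Matrix.single, ite_and, Finset.sum_ite_eq']

lemma quad {n k : ℕ} (Φ : MapV n) {L : Type*} [Fintype L] (N : Matrix L (Fin n × Fin k) ℂ)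
    (x : Fin n × Fin k → ℂ) :
    star x ⬝ᵥ (tensorIdFun k Φ (Nᴴ * N)) *ᵥ x
      = ∑ l, star (∑ i, vecTens (fun a => x (a, i)) (fun b => N l (b, i))) ⬝ᵥ
          (Jmat Φ) *ᵥ (∑ i, vecTens (fun a => x (a, i)) (fun b => N l (b, i))) := by
  have hexp : tensorIdFun k Φ (Nᴴ * N) = Matrix.of fun p q =>
      ∑ b, ∑ e, (Nᴴ * N) (b, p.2) (e, q.2) * Φ (Matrix.single b e 1) p.1 q.1 := by
    ext p q
    exact apply_expand Φ _ _ _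
  rw [hexp]
  simp only [dotProduct, Matrix.mulVec, Matrix.of_apply, Matrix.mul_apply,
    Matrix.conjTranspose_apply, Finset.sum_apply, Pi.star_apply, vecTens, Jmat,
    star_sum, star_mul', Fintype.sum_prod_type, Finset.mul_sum, Finset.sum_mul]
  refine Eq.trans (?_ : _ = ∑ t : Fin n × Fin k × Fin n × Fin k × Fin n × Fin n × L,
      star (x (t.1, t.2.1)) * (star (N t.2.2.2.2.2.2 (t.2.2.2.2.1, t.2.1)) *
        N t.2.2.2.2.2.2 (t.2.2.2.2.2.1, t.2.2.2.1) *
        Φ (Matrix.single t.2.2.2.2.1 t.2.2.2.2.2.1 1) t.1 t.2.2.1 *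
        x (t.2.2.1, t.2.2.2.1))) (Eq.trans (Fintype.sum_equiv
      (⟨fun t => (t.2.2.2.2.2.2, t.1, t.2.2.2.2.1, t.2.2.1, t.2.2.2.2.2.1, t.2.2.2.1, t.2.1),
        fun s => (s.2.1, s.2.2.2.2.2.2, s.2.2.2.1, s.2.2.2.2.2.1, s.2.2.1, s.2.2.2.2.1, s.1),
        fun _ => rfl, fun _ => rfl⟩ :
        (Fin n × Fin k × Fin n × Fin k × Fin n × Fin n × L) ≃
        (L × Fin n × Fin n × Fin n × Fin n × Fin k × Fin k)) _
      (fun s => star (x (s.2.1, s.2.2.2.2.2.2)) * star (N s.1 (s.2.2.1, s.2.2.2.2.2.2)) *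
        (Φ (Matrix.single s.2.2.1 s.2.2.2.2.1 1) s.2.1 s.2.2.2.1 *
          (x (s.2.2.2.1, s.2.2.2.2.2.1) * N s.1 (s.2.2.2.2.1, s.2.2.2.2.2.1))))
      (fun t => by simp only [Equiv.coe_fn_mk]; ring)) ?_)
  · simp only [Fintype.sum_prod_type]
  · simp only [Fintype.sum_prod_type]

/-- `J` maps the set of `k`-positive maps on `L(V)` onto the set of
`k`-block positive operators on `V ⊗ V`. -/
theorem stmt1 (d : ℕ) (hd : 0 < d) (k : ℕ) :
    Jmat '' {Φ : MapV d | IsKPos k Φ} = {A : Mat2 d | IsKBlockPos k A} := by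
  ext A
  simp only [Set.mem_image, Set.mem_setOf_eq]
  constructor
  · rintro ⟨Φ, hΦ, rfl⟩
    intro u v
    set N : Matrix (Fin 1) (Fin d × Fin k) ℂ := Matrix.of fun _ p => v p.2 p.1 with hN
    have hM := Matrix.posSemidef_conjTranspose_mul_self N
    have h2 := (hΦ _ hM).dotProduct_mulVec_nonneg (fun p => u p.2 p.1)
    have hq := quad Φ N (fun p => u p.2 p.1)
    rw [Fin.sum_univ_one] at hq
    exact le_of_le_of_eq h2 hq
  · intro hA
    refine ⟨Jinv A, ?_, Jmat_Jinv A⟩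
    intro M hM
    obtain ⟨B, rfl⟩ : ∃ B : Matrix (Fin d × Fin k) (Fin d × Fin k) ℂ, M = Bᴴ * B := by
      open scoped MatrixOrder in exact CStarAlgebra.nonneg_iff_eq_star_mul_self.mp hM.nonneg
    have hpos : ∀ x, 0 ≤ star x ⬝ᵥ (tensorIdFun k (Jinv A) (Bᴴ * B)) *ᵥ x := by
      intro x
      rw [quad, Jmat_Jinv]
      exact Finset.sum_nonneg fun l _ =>
        hA (fun i => fun a => x (a, i)) (fun i => fun b => B l (b, i))
    refine .of_dotProduct_mulVec_nonneg (isHermitian_of_quad _ (fun x => ?_)) hpos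
    exact Complex.conj_eq_iff_im.mpr ((Complex.le_def.mp (hpos x)).2).symm
end

section
/- For every k ∈ ℕ, the image under the Jamiołkowski isomorphism J of the set of k-superpositive linear maps on L(V) equals the set of k-entangled operators on V⊗V. -/
open scoped ComplexOrder Kronecker
open Matrix

variable {n : ℕ}

section Aux

variable {d k : ℕ}

/-- The Kraus map `ξ ↦ Xᴴ ξ X`. -/
noncomputable def krausMap (X : Mat d) : MapV d where
  toFun ξ := Xᴴ * ξ * X
  map_add' x y := by simp [Matrix.add_mul, Matrix.mul_add]
  map_smul' c x := by simp [Matrix.mul_smul, Matrix.smul_mul]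

/-- The vector associated to a Kraus operator. -/
def wvec (X : Mat d) : Fin d × Fin d → ℂ := fun p => star (X p.2 p.1)

lemma jmat_krausMap (X : Mat d) :
    Jmat (krausMap X) = vecMulVec (wvec X) (star (wvec X)) := by
  ext ⟨a, b⟩ ⟨c, e⟩
  simp only [Jmat, krausMap, Matrix.of_apply, LinearMap.coe_mk, AddHom.coe_mk,
    vecMulVec_apply, Pi.star_apply, wvec, star_star]
  rw [Matrix.mul_apply]
  simp only [Matrix.mul_apply, Matrix.conjTranspose_apply, Matrix.single,
    Matrix.of_apply, mul_ite, mul_one, mul_zero, ite_mul, zero_mul,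
    Finset.sum_ite_eq, Finset.mem_univ, if_true]
  rw [Finset.sum_eq_single e]
  · simp [mul_comm]
  · intro q _ hq; simp [hq, Ne.symm hq]
  · intro h; exact absurd (Finset.mem_univ e) h

lemma Jmat_sum {ι : Type*} (s : Finset ι) (Φ : ι → MapV d) :
    Jmat (∑ i ∈ s, Φ i) = ∑ i ∈ s, Jmat (Φ i) := by
  ext p q; simp [Jmat, Matrix.sum_apply]

lemma sum_dite_fin {M : Type*} [AddCommMonoid M] {r k : ℕ} (hrk : r ≤ k) (F : Fin r → M) :
    (∑ i : Fin k, if h : (i : ℕ) < r then F ⟨i, h⟩ else 0) = ∑ i : Fin r, F i := by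
  have h1 : ∑ i : Fin r, F i
      = ∑ i ∈ Finset.range r, (fun i => if h : i < r then F ⟨i, h⟩ else 0) i := by
    rw [← Fin.sum_univ_eq_sum_range]
    exact Finset.sum_congr rfl fun i _ => by rw [dif_pos i.2]
  rw [h1, Fin.sum_univ_eq_sum_range (fun i => if h : i < r then F ⟨i, h⟩ else 0) k]
  exact (Finset.sum_subset (Finset.range_subset_range.2 hrk)
    (fun x _ hx => dif_neg (by simpa using hx))).symm

lemma rank_le_of_decomp (X : Mat d) (u v : Fin k → Fin d → ℂ)
    (h : ∀ a b, X a b = ∑ i, u i a * v i b) : X.rank ≤ k := by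
  have hX : X = (Matrix.of fun a (i : Fin k) => u i a) *
      (Matrix.of fun (i : Fin k) b => v i b) := by
    ext a b; rw [Matrix.mul_apply]; simpa using h a b
  calc X.rank ≤ (Matrix.of fun (i : Fin k) b => v i b).rank := by
        rw [hX]; exact Matrix.rank_mul_le_right _ _
    _ ≤ Fintype.card (Fin k) := Matrix.rank_le_card_height _
    _ = k := Fintype.card_fin k

lemma decomp_of_rank_le (X : Mat d) (h : X.rank ≤ k) :
    ∃ u v : Fin k → Fin d → ℂ, ∀ a b, X a b = ∑ i, u i a * v i b := by
  set W := Submodule.span ℂ (Set.range Xᵀ) with hWdef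
  have hfr : Module.finrank ℂ W = X.rank := (Matrix.rank_eq_finrank_span_cols X).symm
  have hrk : Module.finrank ℂ W ≤ k := hfr ▸ h
  let b := Module.finBasis ℂ W
  have hmem : ∀ j, Xᵀ j ∈ W := fun j => Submodule.subset_span ⟨j, rfl⟩
  refine ⟨fun i a => if h : (i : ℕ) < Module.finrank ℂ W
            then ((b ⟨i, h⟩ : W) : Fin d → ℂ) a else 0,
          fun i j => if h : (i : ℕ) < Module.finrank ℂ W
            then b.repr ⟨Xᵀ j, hmem j⟩ ⟨i, h⟩ else 0, ?_⟩
  intro a j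
  have hrepr := b.sum_repr ⟨Xᵀ j, hmem j⟩
  have h2 : ∑ i, (((b.repr ⟨Xᵀ j, hmem j⟩ i • b i : W) : Fin d → ℂ)) a = X a j := by
    have := congrArg (fun x : W => (x : Fin d → ℂ) a) hrepr
    rw [← Finset.sum_apply, ← Submodule.coe_sum, hrepr]; rfl
  calc X a j = ∑ i, (((b.repr ⟨Xᵀ j, hmem j⟩ i • b i : W) : Fin d → ℂ)) a := h2.symm
    _ = ∑ i : Fin (Module.finrank ℂ W),
          ((b i : W) : Fin d → ℂ) a * b.repr ⟨Xᵀ j, hmem j⟩ i := by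
        refine Finset.sum_congr rfl fun i _ => ?_
        simp [Submodule.coe_smul, mul_comm]
    _ = ∑ i : Fin k,
          (if h : (i : ℕ) < Module.finrank ℂ W
            then ((b ⟨i, h⟩ : W) : Fin d → ℂ) a else 0) *
          (if h : (i : ℕ) < Module.finrank ℂ W
            then b.repr ⟨Xᵀ j, hmem j⟩ ⟨i, h⟩ else 0) := by
        rw [← sum_dite_fin hrk
          (fun i => ((b i : W) : Fin d → ℂ) a * b.repr ⟨Xᵀ j, hmem j⟩ i)]
        refine Finset.sum_congr rfl fun i _ => ?_
        split_ifs with hi <;> simp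

lemma wvec_decomp_of_rank (X : Mat d) (h : X.rank ≤ k) :
    ∃ u v : Fin k → Fin d → ℂ, wvec X = ∑ i, vecTens (u i) (v i) := by
  obtain ⟨u, v, huv⟩ := decomp_of_rank_le X h
  refine ⟨fun i => star (v i), fun i => star (u i), ?_⟩
  funext p
  simp only [wvec, huv, Finset.sum_apply, vecTens, Pi.star_apply, star_sum, star_mul']
  exact Finset.sum_congr rfl fun i _ => mul_comm _ _

lemma smul_S (t : ℝ) (ht : 0 ≤ t) (u v : Fin k → Fin d → ℂ) :
    ∃ u' v' : Fin k → Fin d → ℂ,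
      t • vecMulVec (∑ i, vecTens (u i) (v i)) (star (∑ i, vecTens (u i) (v i)))
        = vecMulVec (∑ i, vecTens (u' i) (v' i)) (star (∑ i, vecTens (u' i) (v' i))) := by
  refine ⟨fun i => ((Real.sqrt t : ℂ)) • u i, v, ?_⟩
  have hw : (∑ i, vecTens (((Real.sqrt t : ℂ)) • u i) (v i)) =
      ((Real.sqrt t : ℂ)) • ∑ i, vecTens (u i) (v i) := by
    funext p
    simp [vecTens, Finset.mul_sum, mul_assoc]
  rw [hw]
  ext p q
  have h1 : (starRingEnd ℂ) (Real.sqrt t : ℂ) = (Real.sqrt t : ℂ) := Complex.conj_ofReal _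
  have h2 : (Real.sqrt t : ℂ) * (Real.sqrt t : ℂ) = (t : ℂ) := by
    rw [← Complex.ofReal_mul, Real.mul_self_sqrt ht]
  simp only [Matrix.smul_apply, vecMulVec_apply, Pi.star_apply, Pi.smul_apply,
    smul_eq_mul, starRingEnd_apply] at *
  rw [Complex.real_smul]
  rw [star_mul']
  rw [show star ((Real.sqrt t : ℂ)) = (Real.sqrt t : ℂ) from h1]
  ring_nf
  rw [show (Real.sqrt t : ℂ) ^ 2 = (t : ℂ) by rw [sq]; exact h2]
  ring

lemma zero_S : (0 : Mat2 d) = vecMulVec (∑ i : Fin k, vecTens (0 : Fin d → ℂ) 0)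
    (star (∑ i : Fin k, vecTens (0 : Fin d → ℂ) 0)) := by
  have hz : (∑ i : Fin k, vecTens (0 : Fin d → ℂ) 0) = 0 := by
    funext p; simp [vecTens]
  rw [hz]
  ext p q; simp [vecMulVec_apply]

end Aux

/-- `J` maps the set of `k`-superpositive maps on `L(V)` onto the
set of `k`-entangled operators on `V ⊗ V`. -/
theorem stmt2 (d : ℕ) (hd : 0 < d) (k : ℕ) :
    Jmat '' {Φ : MapV d | IsKSuperPos k Φ} = {A : Mat2 d | IsKEntangled k A} := by
  ext A
  simp only [Set.mem_image, Set.mem_setOf_eq]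
  constructor
  · rintro ⟨Φ, ⟨m, X, hrank, hX⟩, rfl⟩
    have hΦ : Φ = ∑ i, krausMap (X i) := by
      apply LinearMap.ext
      intro ξ
      simp [hX, krausMap]
    rw [hΦ, Jmat_sum]
    unfold IsKEntangled
    rcases Nat.eq_zero_or_pos m with hm | hm
    · subst hm
      simp only [Finset.univ_eq_empty, Finset.sum_empty]
      exact subset_convexHull ℝ _ ⟨0, 0, zero_S⟩
    · have hmR : (0 : ℝ) < (m : ℝ) := by exact_mod_cast hm
      have key : ∀ i : Fin m, ∃ u' v' : Fin k → Fin d → ℂ,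
          (m : ℝ) • (Jmat (krausMap (X i)))
            = vecMulVec (∑ j, vecTens (u' j) (v' j))
                (star (∑ j, vecTens (u' j) (v' j))) := by
        intro i
        obtain ⟨u, v, huv⟩ := wvec_decomp_of_rank (X i) (hrank i)
        obtain ⟨u', v', h⟩ := smul_S (m : ℝ) (le_of_lt hmR) u v
        exact ⟨u', v', by rw [jmat_krausMap, huv]; exact h⟩
      have hsum : ∑ _i : Fin m, (m : ℝ)⁻¹ = 1 := by
        simp [Finset.sum_const]
        field_simp
      have hcm : (Finset.univ : Finset (Fin m)).centerMass (fun _ => (m : ℝ)⁻¹)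
          (fun i => (m : ℝ) • Jmat (krausMap (X i)))
          = ∑ i, Jmat (krausMap (X i)) := by
        rw [Finset.centerMass_eq_of_sum_1 _ _ hsum]
        refine Finset.sum_congr rfl fun i _ => ?_
        rw [smul_smul, inv_mul_cancel₀ hmR.ne', one_smul]
      rw [← hcm]
      exact Finset.centerMass_mem_convexHull _ (fun i _ => by positivity)
        (by rw [hsum]; norm_num) (fun i _ => key i)
  · intro hA
    rw [IsKEntangled, convexHull_eq] at hA
    obtain ⟨ι, t, w, z, hw0, hw1, hz, hA⟩ := hA
    have hS : ∀ i : t, ∃ u v : Fin k → Fin d → ℂ,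
        w i • z i = vecMulVec (∑ j, vecTens (u j) (v j))
          (star (∑ j, vecTens (u j) (v j))) := by
      intro i
      obtain ⟨u, v, huv⟩ := hz i i.2
      obtain ⟨u', v', h⟩ := smul_S (w i) (hw0 i i.2) u v
      exact ⟨u', v', by rw [huv]; exact h⟩
    choose u v hW using hS
    set X : t → Mat d := fun i =>
      Matrix.of fun b a => star ((∑ j, vecTens (u i j) (v i j)) (a, b)) with hXdef
    have hwvec : ∀ i : t, wvec (X i) = ∑ j, vecTens (u i j) (v i j) := by
      intro i; funext p
      simp [wvec, hXdef]
    have hrank : ∀ i : t, (X i).rank ≤ k := by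
      intro i
      apply rank_le_of_decomp (X i) (fun j => star (v i j)) (fun j => star (u i j))
      intro b a
      simp only [hXdef, Matrix.of_apply, Finset.sum_apply, vecTens, star_sum, star_mul',
        Pi.star_apply]
      exact Finset.sum_congr rfl fun j _ => mul_comm _ _
    refine ⟨∑ i : t, krausMap (X i), ?_, ?_⟩
    · refine ⟨t.card, fun j => X (t.equivFin.symm j), fun j => hrank _, fun ξ => ?_⟩
      simp only [LinearMap.sum_apply]
      rw [← Equiv.sum_comp t.equivFin.symm (fun i => krausMap (X i) ξ)]
      rfl
    · rw [Jmat_sum]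
      have hJ : ∀ i : t, Jmat (krausMap (X i)) = w i • z i := by
        intro i; rw [jmat_krausMap, hwvec i, ← hW i]
      rw [Finset.sum_congr rfl (fun i _ => hJ i), ← hA,
        Finset.centerMass_eq_of_sum_1 _ _ hw1]
      exact Finset.sum_coe_sort t (fun i => w i • z i)
end

section
/- For every k ∈ ℕ, the cone of k-block positive operators on V⊗V equals the dual cone of the cone of k-entangled operators on V⊗V, taken inside the real vector space H(V⊗V) of Hermitian operators on V⊗V. -/
open scoped ComplexOrder Kronecker
open Matrix

variable {n : ℕ}

lemma trace_vecMulVec_mul {m : Type*} [Fintype m] [DecidableEq m]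
    (w : m → ℂ) (B : Matrix m m ℂ) :
    (Matrix.vecMulVec w (star w) * B).trace = star w ⬝ᵥ B.mulVec w := by
  simp only [Matrix.trace, Matrix.diag, Matrix.mul_apply, Matrix.vecMulVec_apply,
    dotProduct, Matrix.mulVec, Pi.star_apply]
  rw [Finset.sum_comm]
  apply Finset.sum_congr rfl
  intro q _
  rw [Finset.mul_sum]
  apply Finset.sum_congr rfl
  intro p _
  ring

/-- inside the real vector space of Hermitian operators on `V ⊗ V`,
the cone of `k`-block positive operators is the dual cone of the cone of
`k`-entangled operators. -/
theorem stmt3 (d : ℕ) (hd : 0 < d) (k : ℕ) :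
    {A : Mat2 d | A.IsHermitian ∧ IsKBlockPos k A} =
      hermDual {A : Mat2 d | IsKEntangled k A} := by
  ext B
  constructor
  · rintro ⟨hherm, hbp⟩
    refine ⟨hherm, ?_⟩
    intro A hA
    have hsub : {M : Mat2 d | ∃ u v : Fin k → (Fin d → ℂ),
        M = Matrix.vecMulVec (∑ i, vecTens (u i) (v i)) (star (∑ i, vecTens (u i) (v i)))}
        ⊆ {M : Mat2 d | 0 ≤ (M * B).trace} := by
      rintro M ⟨u, v, rfl⟩
      rw [Set.mem_setOf_eq, trace_vecMulVec_mul]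
      exact hbp u v
    have hconv : Convex ℝ {M : Mat2 d | 0 ≤ (M * B).trace} := by
      intro x hx y hy a b ha hb hab
      have : ((a • x + b • y) * B).trace = (a : ℂ) * (x * B).trace + (b : ℂ) * (y * B).trace := by
        simp [Matrix.add_mul, Matrix.smul_mul, Matrix.trace_smul, Complex.real_smul]
      rw [Set.mem_setOf_eq, this]
      exact add_nonneg (mul_nonneg (by exact_mod_cast ha) hx)
        (mul_nonneg (by exact_mod_cast hb) hy)
    exact convexHull_min hsub hconv hA
  · rintro ⟨hherm, hdual⟩
    refine ⟨hherm, ?_⟩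
    intro u v
    have hmem : IsKEntangled k (Matrix.vecMulVec (∑ i, vecTens (u i) (v i))
        (star (∑ i, vecTens (u i) (v i)))) :=
      subset_convexHull ℝ _ ⟨u, v, rfl⟩
    have := hdual _ hmem
    rwa [trace_vecMulVec_mul] at this
end

section
/- For every k ∈ ℕ, the cone of k-entangled operators on V⊗V equals the dual cone of the cone of k-block positive operators on V⊗V, taken inside the real vector space H(V⊗V) of Hermitian operators on V⊗V. -/
open scoped ComplexOrder Kronecker
open scoped Pointwise
open Matrix

variable {n : ℕ}

variable {d k : ℕ}



lemma trace_mul_vecMulVec (M : Matrix (Fin d × Fin d) (Fin d × Fin d) ℂ) (w : Fin d × Fin d → ℂ) :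
    (M * Matrix.vecMulVec w (star w)).trace = star w ⬝ᵥ M.mulVec w := by
  simp only [Matrix.trace, Matrix.diag_apply, Matrix.mul_apply, Matrix.vecMulVec_apply,
    dotProduct, Matrix.mulVec, Pi.star_apply, Finset.mul_sum]
  refine Finset.sum_congr rfl fun p _ => Finset.sum_congr rfl fun q _ => by ring

lemma vecMulVec_isHermitian (w : Fin d × Fin d → ℂ) :
    (Matrix.vecMulVec w (star w)).IsHermitian := by
  unfold Matrix.IsHermitian
  ext p q
  simp [Matrix.conjTranspose_apply, Matrix.vecMulVec_apply, mul_comm]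

lemma trace_vecMulVec (w : Fin d × Fin d → ℂ) :
    (Matrix.vecMulVec w (star w)).trace = ((∑ p, Complex.normSq (w p) : ℝ) : ℂ) := by
  simp only [Matrix.trace, Matrix.diag_apply, Matrix.vecMulVec_apply, Pi.star_apply,
    Complex.star_def, Complex.mul_conj]
  push_cast
  rfl



def entGen (d k : ℕ) : Set (Matrix (Fin d × Fin d) (Fin d × Fin d) ℂ) :=
  {M | ∃ u v : Fin k → (Fin d → ℂ),
    M = Matrix.vecMulVec (∑ i, vecTens (u i) (v i)) (star (∑ i, vecTens (u i) (v i)))}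

lemma sum_vecTens_smul (c : ℂ) (u v : Fin k → (Fin d → ℂ)) :
    (∑ i, vecTens (fun α => c * u i α) (v i)) = c • ∑ i, vecTens (u i) (v i) := by
  funext p
  simp only [Finset.sum_apply, Pi.smul_apply, smul_eq_mul, Finset.mul_sum, vecTens]
  exact Finset.sum_congr rfl fun i _ => by ring

lemma vecMulVec_real_smul (c : ℝ) (w : Fin d × Fin d → ℂ) :
    Matrix.vecMulVec ((c : ℂ) • w) (star ((c : ℂ) • w)) =
      (c^2 : ℝ) • Matrix.vecMulVec w (star w) := by
  ext p q
  simp only [Matrix.vecMulVec_apply, Pi.star_apply, Pi.smul_apply, smul_eq_mul,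
    Complex.star_def, Matrix.smul_apply]
  rw [Complex.real_smul, _root_.map_mul, Complex.conj_ofReal]
  push_cast
  ring

lemma entGen_zero_mem : (0 : Matrix (Fin d × Fin d) (Fin d × Fin d) ℂ) ∈ entGen d k := by
  refine ⟨0, 0, ?_⟩
  ext p q
  simp [vecTens, Matrix.vecMulVec_apply]

lemma entGen_smul_mem {c : ℝ} (hc : 0 ≤ c) {M : Matrix (Fin d × Fin d) (Fin d × Fin d) ℂ}
    (hM : M ∈ entGen d k) : c • M ∈ entGen d k := by
  obtain ⟨u, v, rfl⟩ := hM
  refine ⟨fun i α => (Real.sqrt c : ℂ) * u i α, v, ?_⟩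
  rw [sum_vecTens_smul, vecMulVec_real_smul, Real.sq_sqrt hc]

lemma entHull_smul {c : ℝ} (hc : 0 ≤ c) {A : Matrix (Fin d × Fin d) (Fin d × Fin d) ℂ}
    (hA : A ∈ convexHull ℝ (entGen d k)) : c • A ∈ convexHull ℝ (entGen d k) := by
  have h1 : c • A ∈ c • convexHull ℝ (entGen d k) := ⟨A, hA, rfl⟩
  rw [← convexHull_smul] at h1
  refine convexHull_mono ?_ h1
  rintro x ⟨y, hy, rfl⟩
  exact entGen_smul_mem hc hy

lemma entHull_add {A B : Matrix (Fin d × Fin d) (Fin d × Fin d) ℂ}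
    (hA : A ∈ convexHull ℝ (entGen d k)) (hB : B ∈ convexHull ℝ (entGen d k)) :
    A + B ∈ convexHull ℝ (entGen d k) := by
  have hmid : (1/2 : ℝ) • A + (1/2 : ℝ) • B ∈ convexHull ℝ (entGen d k) :=
    (convex_convexHull ℝ _) hA hB (by norm_num) (by norm_num) (by norm_num)
  have := entHull_smul (by norm_num : (0:ℝ) ≤ 2) hmid
  rwa [smul_add, smul_smul, smul_smul, (by norm_num : (2:ℝ) * (1/2) = 1), one_smul, one_smul] at this



local notation "𝕍" => (Fin d → ℂ)

lemma coord_le_norm (x : EuclideanSpace ℂ (Fin d)) (α : Fin d) : ‖x α‖ ≤ ‖x‖ := by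
  rw [EuclideanSpace.norm_eq]
  have h1 : ‖x α‖ = Real.sqrt (‖x α‖ ^ 2) := by
    rw [Real.sqrt_sq (norm_nonneg _)]
  rw [h1]
  exact Real.sqrt_le_sqrt (Finset.single_le_sum (f := fun i => ‖x i‖ ^ 2)
    (fun i _ => sq_nonneg _) (Finset.mem_univ α))

lemma dite_sum_pad {r : ℕ} (hrk : r ≤ k) (f : Fin r → ℂ) :
    (∑ i : Fin k, if h : (i : ℕ) < r then f ⟨i, h⟩ else 0) = ∑ j : Fin r, f j := by
  have h2 : ∑ j : Fin r, f j = ∑ j : Fin r, (if h : (j:ℕ) < r then f ⟨(j:ℕ), h⟩ else 0) :=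
    Finset.sum_congr rfl fun j _ => by rw [dif_pos j.2]
  rw [h2, Fin.sum_univ_eq_sum_range (fun m => if h : m < r then f ⟨m, h⟩ else 0) k,
    Fin.sum_univ_eq_sum_range (fun m => if h : m < r then f ⟨m, h⟩ else 0) r]
  exact (Finset.sum_subset (Finset.range_subset_range.2 hrk)
    (fun m _ hm => dif_neg (by simpa using hm))).symm

lemma bounded_rep (u v : Fin k → (Fin d → ℂ))
    (hw : ∑ p : Fin d × Fin d, Complex.normSq ((∑ i, vecTens (u i) (v i)) p) = 1) :
    ∃ u' v' : Fin k → (Fin d → ℂ),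
      (∀ i α, ‖u' i α‖ ≤ 1) ∧ (∀ i β, ‖v' i β‖ ≤ 1) ∧
      ∑ i, vecTens (u' i) (v' i) = ∑ i, vecTens (u i) (v i) := by
  classical
  set w : Fin d × Fin d → ℂ := ∑ i, vecTens (u i) (v i) with hwdef
  set Eu := EuclideanSpace ℂ (Fin d) with hEu
  let le : Eu ≃ₗ[ℂ] (Fin d → ℂ) := WithLp.linearEquiv 2 ℂ (Fin d → ℂ)
  let U : Submodule ℂ Eu := Submodule.span ℂ (Set.range fun i => le.symm (u i))
  set r := Module.finrank ℂ U with hr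
  have hrk : r ≤ k := by
    calc r ≤ (Set.range fun i => le.symm (u i)).toFinset.card := finrank_span_le_card _
    _ = Fintype.card (Set.range fun i => le.symm (u i)) := Set.toFinset_card _
    _ ≤ Fintype.card (Fin k) := Fintype.card_range_le _
    _ = k := Fintype.card_fin k
  let b := stdOrthonormalBasis ℂ U
  let a : Fin r → (Fin d → ℂ) := fun j => le ((b j : Eu))
  -- expansion of elements of U
  have hexp : ∀ x : Eu, x ∈ U → ∀ α,
      le x α = ∑ j, (∑ α', (starRingEnd ℂ) (a j α') * le x α') * a j α := by
    intro x hx α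
    have h1 : ∑ j, b.repr ⟨x, hx⟩ j • b j = (⟨x, hx⟩ : U) := b.sum_repr ⟨x, hx⟩
    have h2 : ∑ j, b.repr ⟨x, hx⟩ j • le ((b j : Eu)) = le x := by
      have h3 := congrArg (fun z : U => le (z : Eu)) h1
      simp only at h3
      rw [← h3]
      rw [Submodule.coe_sum]
      rw [map_sum]
      simp [Submodule.coe_smul]
    have h4 : ∀ j, b.repr ⟨x, hx⟩ j = ∑ α', (starRingEnd ℂ) (a j α') * le x α' := by
      intro j
      rw [b.repr_apply_apply]
      rw [Submodule.coe_inner]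
      rw [PiLp.inner_apply]
      exact Finset.sum_congr rfl fun i _ => RCLike.inner_apply' _ _
    calc le x α = (∑ j, b.repr ⟨x, hx⟩ j • le ((b j : Eu))) α := by rw [h2]
    _ = ∑ j, b.repr ⟨x, hx⟩ j * a j α := by
        rw [Finset.sum_apply]
        exact Finset.sum_congr rfl fun j _ => rfl
    _ = ∑ j, (∑ α', (starRingEnd ℂ) (a j α') * le x α') * a j α :=
        Finset.sum_congr rfl fun j _ => by rw [h4 j]
  have hmemU : ∀ i, le.symm (u i) ∈ U := fun i => Submodule.subset_span ⟨i, rfl⟩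
  have hu_exp : ∀ i α, u i α = ∑ j, (∑ α', (starRingEnd ℂ) (a j α') * u i α') * a j α := by
    intro i α
    have := hexp (le.symm (u i)) (hmemU i) α
    simpa using this
  -- the coefficient vectors
  let c : Fin r → (Fin d → ℂ) := fun j β => ∑ α, (starRingEnd ℂ) (a j α) * w (α, β)
  have ha_bound : ∀ j α, ‖a j α‖ ≤ 1 := by
    intro j α
    have h1 : ‖(b j : Eu)‖ = 1 := by
      have := b.orthonormal.1 j
      exact this
    have := coord_le_norm (b j : Eu) α
    rw [h1] at this
    exact this
  have hwsq : ∀ β, ∑ α, Complex.normSq (w (α, β)) ≤ 1 := by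
    intro β
    rw [← hw, Fintype.sum_prod_type_right]
    exact Finset.single_le_sum (f := fun β' => ∑ α, Complex.normSq (w (α, β')))
      (fun β' _ => Finset.sum_nonneg fun α _ => Complex.normSq_nonneg _) (Finset.mem_univ β)
  have hc_bound : ∀ j β, ‖c j β‖ ≤ 1 := by
    intro j β
    have h1 : ‖(b j : Eu)‖ = 1 := by
      have := b.orthonormal.1 j
      exact this
    set col : Eu := le.symm (fun α => w (α, β)) with hcol
    have h2 : c j β = inner (𝕜 := ℂ) ((b j : Eu)) col := by
      rw [PiLp.inner_apply]
      exact Finset.sum_congr rfl fun i _ => (RCLike.inner_apply' _ _).symm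
    have h3 : ‖c j β‖ ≤ ‖(b j : Eu)‖ * ‖col‖ := by
      rw [h2]
      exact norm_inner_le_norm _ _
    have h4 : ‖col‖ ≤ 1 := by
      rw [EuclideanSpace.norm_eq]
      refine Real.sqrt_le_one.2 ?_
      have h5 : ∀ α, ‖col α‖ ^ 2 = Complex.normSq (w (α, β)) := by
        intro α
        have : col α = w (α, β) := rfl
        rw [this, ← Complex.sq_norm]
      calc ∑ α, ‖col α‖ ^ 2 = ∑ α, Complex.normSq (w (α, β)) :=
            Finset.sum_congr rfl fun α _ => h5 α
      _ ≤ 1 := hwsq β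
    calc ‖c j β‖ ≤ ‖(b j : Eu)‖ * ‖col‖ := h3
    _ = ‖col‖ := by rw [h1, one_mul]
    _ ≤ 1 := h4
  -- main identity
  have key : ∀ p : Fin d × Fin d, (∑ j, vecTens (a j) (c j)) p = w p := by
    rintro ⟨α, β⟩
    have hwab : ∀ α', w (α', β) = ∑ i, u i α' * v i β := by
      intro α'
      rw [hwdef]
      rw [Finset.sum_apply]
      rfl
    rw [Finset.sum_apply]
    calc ∑ j, vecTens (a j) (c j) (α, β)
        = ∑ j, ∑ α', ∑ i, ((starRingEnd ℂ) (a j α') * u i α') * a j α * v i β := by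
          refine Finset.sum_congr rfl fun j _ => ?_
          show a j α * (∑ α', (starRingEnd ℂ) (a j α') * w (α', β)) = _
          rw [Finset.mul_sum]
          refine Finset.sum_congr rfl fun α' _ => ?_
          rw [hwab α', Finset.mul_sum, Finset.mul_sum]
          exact Finset.sum_congr rfl fun i _ => by ring
    _ = ∑ i, ∑ j, ∑ α', ((starRingEnd ℂ) (a j α') * u i α') * a j α * v i β := by
          rw [show (∑ j, ∑ α', ∑ i, ((starRingEnd ℂ) (a j α') * u i α') * a j α * v i β)
              = ∑ j, ∑ i, ∑ α', ((starRingEnd ℂ) (a j α') * u i α') * a j α * v i β from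
            Finset.sum_congr rfl fun j _ => Finset.sum_comm]
          exact Finset.sum_comm
    _ = ∑ i, (∑ j, (∑ α', (starRingEnd ℂ) (a j α') * u i α') * a j α) * v i β := by
          refine Finset.sum_congr rfl fun i _ => ?_
          rw [Finset.sum_mul]
          refine Finset.sum_congr rfl fun j _ => ?_
          rw [Finset.sum_mul, Finset.sum_mul]
          try exact Finset.sum_congr rfl fun α' _ => by ring
    _ = ∑ i, u i α * v i β := Finset.sum_congr rfl fun i _ => by rw [← hu_exp i α]
    _ = w (α, β) := (hwab α).symm
  refine ⟨fun i => if h : (i : ℕ) < r then a ⟨(i:ℕ), h⟩ else 0,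
         fun i => if h : (i : ℕ) < r then c ⟨(i:ℕ), h⟩ else 0, ?_, ?_, ?_⟩
  · intro i α
    by_cases h : (i : ℕ) < r
    · simp only [dif_pos h]; exact ha_bound _ α
    · simp only [dif_neg h]; simp
  · intro i β
    by_cases h : (i : ℕ) < r
    · simp only [dif_pos h]; exact hc_bound _ β
    · simp only [dif_neg h]; simp
  · funext p
    rw [Finset.sum_apply]
    have h6 : ∀ i : Fin k,
        vecTens (if h : (i : ℕ) < r then a ⟨(i:ℕ), h⟩ else 0)
          (if h : (i : ℕ) < r then c ⟨(i:ℕ), h⟩ else 0) p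
        = (if h : (i : ℕ) < r then a ⟨(i:ℕ), h⟩ p.1 * c ⟨(i:ℕ), h⟩ p.2 else 0) := by
      intro i
      by_cases h : (i : ℕ) < r
      · rw [dif_pos h, dif_pos h, dif_pos h]; rfl
      · rw [dif_neg h, dif_neg h, dif_neg h]; simp [vecTens]
    rw [Finset.sum_congr rfl fun i _ => h6 i, dite_sum_pad hrk (fun j => a j p.1 * c j p.2)]
    have h7 := key p
    rw [Finset.sum_apply] at h7
    exact h7



def Dset (d k : ℕ) : Set ((Fin k → Fin d → ℂ) × (Fin k → Fin d → ℂ)) :=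
  {q | (∀ i α, ‖q.1 i α‖ ≤ 1) ∧ (∀ i β, ‖q.2 i β‖ ≤ 1) ∧
    ∑ p : Fin d × Fin d, Complex.normSq ((∑ i, vecTens (q.1 i) (q.2 i)) p) = 1}

lemma continuous_wS_entry (p : Fin d × Fin d) :
    Continuous (fun q : (Fin k → Fin d → ℂ) × (Fin k → Fin d → ℂ) =>
      (∑ i, vecTens (q.1 i) (q.2 i)) p) := by
  have h : (fun q : (Fin k → Fin d → ℂ) × (Fin k → Fin d → ℂ) =>
      (∑ i, vecTens (q.1 i) (q.2 i)) p) = fun q => ∑ i, q.1 i p.1 * q.2 i p.2 := by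
    funext q
    rw [Finset.sum_apply]
    rfl
  rw [h]
  exact continuous_finset_sum _ fun i _ => by fun_prop

lemma isClosed_Dset : IsClosed (Dset d k) := by
  have h1 : IsClosed {q : (Fin k → Fin d → ℂ) × (Fin k → Fin d → ℂ) |
      ∀ i α, ‖q.1 i α‖ ≤ 1} := by
    rw [Set.setOf_forall]
    refine isClosed_iInter fun i => ?_
    rw [Set.setOf_forall]
    refine isClosed_iInter fun α => ?_
    exact isClosed_le (continuous_norm.comp
      (by fun_prop : Continuous fun x : (Fin k → Fin d → ℂ) × (Fin k → Fin d → ℂ) => x.1 i α))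
      continuous_const
  have h2 : IsClosed {q : (Fin k → Fin d → ℂ) × (Fin k → Fin d → ℂ) |
      ∀ i β, ‖q.2 i β‖ ≤ 1} := by
    rw [Set.setOf_forall]
    refine isClosed_iInter fun i => ?_
    rw [Set.setOf_forall]
    refine isClosed_iInter fun β => ?_
    exact isClosed_le (continuous_norm.comp
      (by fun_prop : Continuous fun x : (Fin k → Fin d → ℂ) × (Fin k → Fin d → ℂ) => x.2 i β))
      continuous_const
  have h3 : IsClosed {q : (Fin k → Fin d → ℂ) × (Fin k → Fin d → ℂ) |
      ∑ p : Fin d × Fin d, Complex.normSq ((∑ i, vecTens (q.1 i) (q.2 i)) p) = 1} := by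
    refine isClosed_eq ?_ continuous_const
    exact continuous_finset_sum _ fun p _ =>
      Complex.continuous_normSq.comp (continuous_wS_entry p)
  exact h1.inter (h2.inter h3)

lemma isCompact_Dset : IsCompact (Dset d k) := by
  have hc : IsCompact ((Set.univ.pi fun _ : Fin k => Set.univ.pi fun _ : Fin d =>
      Metric.closedBall (0:ℂ) 1) ×ˢ (Set.univ.pi fun _ : Fin k => Set.univ.pi fun _ : Fin d =>
      Metric.closedBall (0:ℂ) 1)) :=
    (isCompact_univ_pi fun _ => isCompact_univ_pi fun _ => isCompact_closedBall _ _).prod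
      (isCompact_univ_pi fun _ => isCompact_univ_pi fun _ => isCompact_closedBall _ _)
  refine hc.of_isClosed_subset isClosed_Dset ?_
  rintro ⟨u', v'⟩ ⟨hu, hv, -⟩
  constructor
  · intro i _
    intro α _
    simp only [Metric.mem_closedBall, Complex.dist_eq, sub_zero]
    exact hu i α
  · intro i _
    intro α _
    simp only [Metric.mem_closedBall, Complex.dist_eq, sub_zero]
    exact hv i α

lemma Dset_nonempty (hd : 0 < d) (hk : 0 < k) : (Dset d k).Nonempty := by
  classical
  set e : Fin d → ℂ := fun α => if α = ⟨0, hd⟩ then 1 else 0 with he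
  set u : Fin k → Fin d → ℂ := fun i => if i = ⟨0, hk⟩ then e else 0 with hu
  refine ⟨(u, u), ?_, ?_, ?_⟩
  · intro i α
    by_cases h : i = ⟨0, hk⟩ <;> by_cases h' : α = ⟨0, hd⟩ <;> simp [hu, he, h, h']
  · intro i α
    by_cases h : i = ⟨0, hk⟩ <;> by_cases h' : α = ⟨0, hd⟩ <;> simp [hu, he, h, h']
  · have hsum : (∑ i, vecTens (u i) (u i)) = vecTens e e := by
      have h0 : ∀ i : Fin k, vecTens (u i) (u i) =
          if i = ⟨0, hk⟩ then vecTens e e else 0 := by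
        intro i
        by_cases h : i = ⟨0, hk⟩
        · simp [hu, h]
        · funext p
          simp [hu, h, vecTens]
      rw [Finset.sum_congr rfl fun i _ => h0 i, Finset.sum_ite_eq' Finset.univ _ _]
      simp
    rw [hsum]
    have hterm : ∀ p : Fin d × Fin d, Complex.normSq (vecTens e e p) =
        (if p.1 = ⟨0, hd⟩ then (1:ℝ) else 0) * (if p.2 = ⟨0, hd⟩ then (1:ℝ) else 0) := by
      rintro ⟨α, β⟩
      by_cases h : α = ⟨0, hd⟩ <;> by_cases h' : β = ⟨0, hd⟩ <;> simp [vecTens, he, h, h']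
    rw [Finset.sum_congr rfl fun p _ => hterm p]
    rw [Fintype.sum_prod_type]
    simp

lemma normSq_sum_zero {w : Fin d × Fin d → ℂ}
    (h : ∑ p : Fin d × Fin d, Complex.normSq (w p) = 0) : w = 0 := by
  funext p
  have := (Finset.sum_eq_zero_iff_of_nonneg (fun p _ => Complex.normSq_nonneg (w p))).1 h
    p (Finset.mem_univ p)
  exact Complex.normSq_eq_zero.1 this

lemma mem_entGen_decomp (hd : 0 < d) (hk : 0 < k)
    {M : Matrix (Fin d × Fin d) (Fin d × Fin d) ℂ} (hM : M ∈ entGen d k) :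
    ∃ t : ℝ, 0 ≤ t ∧ ∃ q ∈ Dset d k,
      M = t • Matrix.vecMulVec (∑ i, vecTens (q.1 i) (q.2 i))
        (star (∑ i, vecTens (q.1 i) (q.2 i))) := by
  classical
  obtain ⟨u, v, rfl⟩ := hM
  set w : Fin d × Fin d → ℂ := ∑ i, vecTens (u i) (v i) with hwdef
  set τ : ℝ := ∑ p, Complex.normSq (w p) with hτ
  have hτ0 : 0 ≤ τ := Finset.sum_nonneg fun p _ => Complex.normSq_nonneg _
  rcases eq_or_lt_of_le hτ0 with hz | hpos
  · -- w = 0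
    obtain ⟨q₀, hq₀⟩ := Dset_nonempty hd hk
    refine ⟨0, le_refl _, q₀, hq₀, ?_⟩
    have hw0 : w = 0 := normSq_sum_zero hz.symm
    rw [hw0]
    ext p q
    simp [Matrix.vecMulVec_apply]
  · -- rescale
    set s : ℝ := (Real.sqrt τ)⁻¹ with hs
    have hsτ : Real.sqrt τ > 0 := Real.sqrt_pos.2 hpos
    have hs0 : 0 < s := inv_pos.2 hsτ
    set u' : Fin k → Fin d → ℂ := fun i α => (s : ℂ) * u i α with hu'
    have hw' : (∑ i, vecTens (u' i) (v i)) = (s : ℂ) • w := by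
      rw [hwdef]; exact sum_vecTens_smul (s : ℂ) u v
    have hnsq : ∑ p : Fin d × Fin d, Complex.normSq ((∑ i, vecTens (u' i) (v i)) p) = 1 := by
      rw [hw']
      have : ∀ p, Complex.normSq (((s:ℂ) • w) p) = s^2 * Complex.normSq (w p) := by
        intro p
        simp only [Pi.smul_apply, smul_eq_mul, Complex.normSq_mul, Complex.normSq_ofReal]
        ring
      rw [Finset.sum_congr rfl fun p _ => this p, ← Finset.mul_sum, ← hτ, hs]
      rw [← Real.sqrt_inv]
      rw [Real.sq_sqrt (inv_nonneg.2 (le_of_lt hpos))]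
      exact inv_mul_cancel₀ (ne_of_gt hpos)
    obtain ⟨u'', v'', hub, hvb, hsum⟩ := bounded_rep u' v hnsq
    refine ⟨τ, hτ0, (u'', v''), ⟨hub, hvb, by rw [hsum]; exact hnsq⟩, ?_⟩
    -- M = τ • vecMulVec (w'') (star w'') where w'' = (s:ℂ) • w
    rw [hsum, hw']
    have h2 : Matrix.vecMulVec ((s:ℂ) • w) (star ((s:ℂ) • w))
        = (s^2 : ℝ) • Matrix.vecMulVec w (star w) := vecMulVec_real_smul s w
    rw [h2, smul_smul]
    have h3 : τ * s^2 = 1 := by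
      rw [hs, ← Real.sqrt_inv, Real.sq_sqrt (inv_nonneg.2 (le_of_lt hpos))]
      exact mul_inv_cancel₀ (ne_of_gt hpos)
    rw [h3, one_smul]

noncomputable def genOf (d k : ℕ) (q : (Fin k → Fin d → ℂ) × (Fin k → Fin d → ℂ)) :
    Matrix (Fin d × Fin d) (Fin d × Fin d) ℂ :=
  Matrix.vecMulVec (∑ i, vecTens (q.1 i) (q.2 i)) (star (∑ i, vecTens (q.1 i) (q.2 i)))

def coneSet (d k N : ℕ) : Set (Matrix (Fin d × Fin d) (Fin d × Fin d) ℂ) :=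
  {A | ∃ (τ : Fin N → ℝ) (qs : Fin N → ((Fin k → Fin d → ℂ) × (Fin k → Fin d → ℂ))),
    (∀ j, 0 ≤ τ j) ∧ (∀ j, qs j ∈ Dset d k) ∧ A = ∑ j, τ j • genOf d k (qs j)}

lemma trace_genOf {q : (Fin k → Fin d → ℂ) × (Fin k → Fin d → ℂ)} (hq : q ∈ Dset d k) :
    (genOf d k q).trace = 1 := by
  rw [genOf, trace_vecMulVec, hq.2.2]
  exact Complex.ofReal_one

lemma continuous_genOf :
    Continuous (fun q : (Fin k → Fin d → ℂ) × (Fin k → Fin d → ℂ) => genOf d k q) := by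
  apply continuous_matrix
  intro p p'
  have h : (fun q : (Fin k → Fin d → ℂ) × (Fin k → Fin d → ℂ) => genOf d k q p p')
      = fun q => ((∑ i, vecTens (q.1 i) (q.2 i)) p) *
          star ((∑ i, vecTens (q.1 i) (q.2 i)) p') := rfl
  rw [h]
  exact (continuous_wS_entry p).mul (continuous_star.comp (continuous_wS_entry p'))

attribute [local instance] Matrix.normedAddCommGroup Matrix.normedSpace

lemma isClosed_coneSet (N : ℕ) : IsClosed (coneSet d k N) := by
  haveI : SequentialSpace (Matrix (Fin d × Fin d) (Fin d × Fin d) ℂ) :=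
    inferInstanceAs (SequentialSpace (Fin d × Fin d → Fin d × Fin d → ℂ))
  refine IsSeqClosed.isClosed ?_
  intro y A hy hlim
  choose τ qs hτ hD hEq using hy
  have htr : ∀ n, ((y n).trace).re = ∑ j, τ n j := by
    intro n
    rw [hEq n, Matrix.trace_sum]
    have h1 : ∀ j, ((τ n j • genOf d k (qs n j)).trace) = ((τ n j : ℝ) : ℂ) := by
      intro j
      rw [Matrix.trace_smul, trace_genOf (hD n j)]
      simp [Complex.real_smul]
    rw [Finset.sum_congr rfl fun j _ => h1 j]
    rw [← Complex.ofReal_sum]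
    exact Complex.ofReal_re _
  have hcont_tr : Continuous fun B : Matrix (Fin d × Fin d) (Fin d × Fin d) ℂ => (B.trace).re :=
    Complex.continuous_re.comp
      (continuous_finset_sum _ fun p _ => (continuous_apply p).comp (continuous_apply p))
  have htend : Filter.Tendsto (fun n => ∑ j, τ n j) Filter.atTop (nhds ((A.trace).re)) := by
    have h2 := (hcont_tr.tendsto A).comp hlim
    have h3 : (fun n => ∑ j, τ n j) = fun n => ((y n).trace).re := by
      funext n; rw [htr n]
    rw [h3]
    exact h2
  obtain ⟨M, hM⟩ := htend.bddAbove_range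
  have hbound : ∀ n j, τ n j ∈ Set.Icc (0:ℝ) M := by
    intro n j
    refine ⟨hτ n j, ?_⟩
    exact (Finset.single_le_sum (fun j' _ => hτ n j') (Finset.mem_univ j)).trans (hM ⟨n, rfl⟩)
  have hcomp : IsCompact ((Set.univ.pi fun _ : Fin N => Set.Icc (0:ℝ) M) ×ˢ
      (Set.univ.pi fun _ : Fin N => Dset d k)) :=
    (isCompact_univ_pi fun _ => isCompact_Icc).prod (isCompact_univ_pi fun _ => isCompact_Dset)
  have hmem : ∀ n, ((τ n, qs n) : (Fin N → ℝ) ×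
      (Fin N → ((Fin k → Fin d → ℂ) × (Fin k → Fin d → ℂ)))) ∈
      ((Set.univ.pi fun _ : Fin N => Set.Icc (0:ℝ) M) ×ˢ
      (Set.univ.pi fun _ : Fin N => Dset d k)) :=
    fun n => ⟨fun j _ => hbound n j, fun j _ => hD n j⟩
  obtain ⟨a, hamem, φ, hφ, hφlim⟩ := hcomp.tendsto_subseq hmem
  have hcontG : Continuous (fun z : (Fin N → ℝ) ×
      (Fin N → ((Fin k → Fin d → ℂ) × (Fin k → Fin d → ℂ))) =>
        ∑ j, z.1 j • genOf d k (z.2 j)) :=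
    continuous_finset_sum _ fun j _ =>
      ((continuous_apply j).comp continuous_fst).smul
        (continuous_genOf.comp ((continuous_apply j).comp continuous_snd))
  have h5 : Filter.Tendsto (fun n => y (φ n)) Filter.atTop
      (nhds (∑ j, a.1 j • genOf d k (a.2 j))) := by
    have h6 := (hcontG.tendsto a).comp hφlim
    have h7 : (fun n => y (φ n)) = fun n => ∑ j, τ (φ n) j • genOf d k (qs (φ n) j) := by
      funext n; exact hEq (φ n)
    rw [h7]
    exact h6
  have h8 : Filter.Tendsto (fun n => y (φ n)) Filter.atTop (nhds A) :=
    hlim.comp hφ.tendsto_atTop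
  have hAeq : A = ∑ j, a.1 j • genOf d k (a.2 j) := tendsto_nhds_unique h8 h5
  exact ⟨a.1, a.2, fun j => (hamem.1 j (Set.mem_univ j)).1,
    fun j => hamem.2 j (Set.mem_univ j), hAeq⟩

lemma genOf_def (q : (Fin k → Fin d → ℂ) × (Fin k → Fin d → ℂ)) :
    genOf d k q = Matrix.vecMulVec (∑ i, vecTens (q.1 i) (q.2 i))
      (star (∑ i, vecTens (q.1 i) (q.2 i))) := rfl

lemma coneSet_subset_hull (N : ℕ) : coneSet d k N ⊆ convexHull ℝ (entGen d k) := by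
  rintro A ⟨τ, qs, hτ, hD, rfl⟩
  refine Finset.sum_induction _ (· ∈ convexHull ℝ (entGen d k))
    (fun a b ha hb => entHull_add ha hb)
    (subset_convexHull ℝ _ entGen_zero_mem) ?_
  intro j _
  exact subset_convexHull ℝ _ (entGen_smul_mem (hτ j) ⟨(qs j).1, (qs j).2, rfl⟩)

lemma hull_subset_coneSet (hd : 0 < d) (hk : 0 < k) :
    convexHull ℝ (entGen d k) ⊆
      coneSet d k (Module.finrank ℝ (Matrix (Fin d × Fin d) (Fin d × Fin d) ℂ) + 1) := by
  classical
  set N := Module.finrank ℝ (Matrix (Fin d × Fin d) (Fin d × Fin d) ℂ) + 1 with hN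
  intro x hx
  obtain ⟨ι, hι, z, wt, hzs, hai, hpos, hsum1, hxeq⟩ := eq_pos_convex_span_of_mem_convexHull hx
  letI := hι
  have hcard : Fintype.card ι ≤ N := by
    refine hai.card_le_finrank_succ.trans ?_
    exact Nat.add_le_add_right (Submodule.finrank_le _) 1
  obtain ⟨e⟩ : Nonempty (ι ↪ Fin N) :=
    Function.Embedding.nonempty_of_card_le (by simpa using hcard)
  have hz' : ∀ i, z i ∈ entGen d k := fun i => hzs (Set.mem_range_self i)
  choose t ht q hq hzeq using fun i => mem_entGen_decomp hd hk (hz' i)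
  obtain ⟨q₀, hq₀⟩ := Dset_nonempty hd hk
  refine ⟨fun j => if h : ∃ i, e i = j then wt h.choose * t h.choose else 0,
          fun j => if h : ∃ i, e i = j then q h.choose else q₀, ?_, ?_, ?_⟩
  · intro j; by_cases h : ∃ i, e i = j
    · simp only [dif_pos h]; exact mul_nonneg (le_of_lt (hpos _)) (ht _)
    · simp only [dif_neg h]; exact le_refl 0
  · intro j; by_cases h : ∃ i, e i = j
    · simp only [dif_pos h]; exact hq _
    · simp only [dif_neg h]; exact hq₀
  · rw [← hxeq]
    have hstep : ∑ j : Fin N,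
        (if h : ∃ i, e i = j then wt h.choose * t h.choose else 0) •
          genOf d k (if h : ∃ i, e i = j then q h.choose else q₀)
        = ∑ j ∈ Finset.univ.map e,
        (if h : ∃ i, e i = j then wt h.choose * t h.choose else 0) •
          genOf d k (if h : ∃ i, e i = j then q h.choose else q₀) := by
      refine (Finset.sum_subset (Finset.subset_univ _) ?_).symm
      intro j _ hj
      have hne : ¬ ∃ i, e i = j := by
        intro ⟨i, hi⟩
        exact hj (Finset.mem_map.2 ⟨i, Finset.mem_univ i, hi⟩)
      simp only [dif_neg hne, zero_smul]
    rw [hstep, Finset.sum_map]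
    refine Finset.sum_congr rfl fun i _ => ?_
    have hex : ∃ i', e i' = e i := ⟨i, rfl⟩
    rw [dif_pos hex, dif_pos hex]
    have hch : hex.choose = i := e.injective hex.choose_spec
    rw [hch, hzeq i, mul_smul, genOf_def]


lemma isKEntangled_iff (A : Mat2 d) : IsKEntangled k A ↔ A ∈ convexHull ℝ (entGen d k) :=
  Iff.rfl

lemma hull_subset_hermDual :
    convexHull ℝ (entGen d k) ⊆ hermDual {A : Mat2 d | A.IsHermitian ∧ IsKBlockPos k A} := by
  refine convexHull_min ?_ ?_
  · rintro M ⟨u, v, rfl⟩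
    refine ⟨vecMulVec_isHermitian _, ?_⟩
    rintro A ⟨-, hbp⟩
    rw [trace_mul_vecMulVec]
    exact hbp u v
  · intro X hX Y hY a b ha hb hab
    refine ⟨?_, ?_⟩
    · have hX1 := hX.1
      have hY1 := hY.1
      unfold Matrix.IsHermitian at hX1 hY1 ⊢
      rw [Matrix.conjTranspose_add, Matrix.conjTranspose_smul, Matrix.conjTranspose_smul,
        star_trivial, star_trivial, hX1, hY1]
    · intro A hA
      have h1 := hX.2 A hA
      have h2 := hY.2 A hA
      rw [Matrix.mul_add, Matrix.mul_smul, Matrix.mul_smul, Matrix.trace_add,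
        Matrix.trace_smul, Matrix.trace_smul]
      rw [Complex.le_def] at h1 h2 ⊢
      simp only [Complex.zero_re, Complex.zero_im] at h1 h2 ⊢
      constructor
      · have e1 : ((a • (A * X).trace + b • (A * Y).trace).re)
            = a * ((A * X).trace).re + b * ((A * Y).trace).re := by
          simp [Complex.real_smul, Complex.add_re, Complex.mul_re]
        rw [e1]
        exact add_nonneg (mul_nonneg ha h1.1) (mul_nonneg hb h2.1)
      · have e2 : ((a • (A * X).trace + b • (A * Y).trace).im)
            = a * ((A * X).trace).im + b * ((A * Y).trace).im := by
          simp [Complex.real_smul, Complex.add_im, Complex.mul_im]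
        rw [e2, ← h1.2, ← h2.2]
        ring

lemma herm_sq_trace_zero {B : Mat2 d} (hB : B.IsHermitian) (h : (B * B).trace = 0) : B = 0 := by
  have h1 : (Bᴴ * B).trace = 0 := by
    rw [show Bᴴ = B from hB]
    exact h
  have h2 : (Bᴴ * B).trace = ((∑ p, ∑ q, Complex.normSq (B q p) : ℝ) : ℂ) := by
    push_cast
    simp only [Matrix.trace, Matrix.diag_apply, Matrix.mul_apply, Matrix.conjTranspose_apply,
      Complex.star_def]
    refine Finset.sum_congr rfl fun p _ => Finset.sum_congr rfl fun q _ => ?_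
    rw [Complex.normSq_eq_conj_mul_self]
  rw [h2] at h1
  have h3 : (∑ p, ∑ q, Complex.normSq (B q p) : ℝ) = 0 := by exact_mod_cast h1
  have h4 : ∀ p q, Complex.normSq (B q p) = 0 := by
    intro p q
    have houter := (Finset.sum_eq_zero_iff_of_nonneg
      (fun p _ => Finset.sum_nonneg fun q _ => Complex.normSq_nonneg (B q p))).1 h3 p
      (Finset.mem_univ p)
    exact (Finset.sum_eq_zero_iff_of_nonneg
      (fun q _ => Complex.normSq_nonneg (B q p))).1 houter q (Finset.mem_univ q)
  ext p q
  exact Complex.normSq_eq_zero.1 (h4 q p)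

lemma hermDual_subset_hull (hd : 0 < d) (hk : 0 < k) :
    hermDual {A : Mat2 d | A.IsHermitian ∧ IsKBlockPos k A} ⊆ convexHull ℝ (entGen d k) := by
  intro B hB
  by_contra hBE
  have hEclosed : IsClosed (convexHull ℝ (entGen d k)) := by
    rw [subset_antisymm (hull_subset_coneSet hd hk) (coneSet_subset_hull _)]
    exact isClosed_coneSet _
  haveI : LocallyConvexSpace ℝ (Matrix (Fin d × Fin d) (Fin d × Fin d) ℂ) :=
    inferInstanceAs (LocallyConvexSpace ℝ (Fin d × Fin d → Fin d × Fin d → ℂ))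
  obtain ⟨f, u₀, hfE, hfB⟩ :=
    geometric_hahn_banach_closed_point (convex_convexHull ℝ _) hEclosed hBE
  have hu₀ : 0 < u₀ := by
    have := hfE 0 (subset_convexHull ℝ _ entGen_zero_mem)
    simpa using this
  have hfE' : ∀ a ∈ convexHull ℝ (entGen d k), f a ≤ 0 := by
    intro a ha
    by_contra hfa
    push_neg at hfa
    have ht : (0:ℝ) ≤ u₀ / f a + 1 := by positivity
    have h5 := hfE _ (entHull_smul ht ha)
    rw [_root_.map_smul, smul_eq_mul] at h5
    have h6 : (u₀ / f a + 1) * f a = u₀ + f a := by field_simp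
    rw [h6] at h5
    linarith
  -- build the separating Hermitian operator
  set g : Mat2 d →L[ℝ] ℝ := -f with hg
  have hgB : g B < 0 := by
    have : g B = -(f B) := rfl
    rw [this]
    linarith
  have hgE : ∀ a ∈ convexHull ℝ (entGen d k), 0 ≤ g a := by
    intro a ha
    have : g a = -(f a) := rfl
    rw [this]
    linarith [hfE' a ha]
  set C : Mat2 d := Matrix.of fun p q =>
      ((g (Matrix.single q p (1:ℂ)) : ℝ) : ℂ)
        - Complex.I * ((g (Complex.I • Matrix.single q p (1:ℂ)) : ℝ) : ℂ) with hC
  have hentry : ∀ (p q : Fin d × Fin d) (z : ℂ),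
      (C p q * z).re
        = g (z.re • Matrix.single q p (1:ℂ) + z.im • (Complex.I • Matrix.single q p (1:ℂ))) := by
    intro p q z
    rw [map_add, _root_.map_smul, _root_.map_smul, smul_eq_mul, smul_eq_mul]
    have hCpq : C p q = ((g (Matrix.single q p (1:ℂ)) : ℝ) : ℂ)
        - Complex.I * ((g (Complex.I • Matrix.single q p (1:ℂ)) : ℝ) : ℂ) := rfl
    rw [hCpq]
    simp [Complex.sub_re, Complex.mul_re, Complex.ofReal_re, Complex.ofReal_im,
      Complex.I_re, Complex.I_im, Complex.sub_im, Complex.mul_im]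
    ring
  have hdecomp : ∀ X : Mat2 d, X = ∑ q : Fin d × Fin d, ∑ p : Fin d × Fin d,
      ((X q p).re • Matrix.single q p (1:ℂ)
        + (X q p).im • (Complex.I • Matrix.single q p (1:ℂ))) := by
    intro X
    ext a b
    rw [Matrix.sum_apply]
    have hterm : ∀ q, (∑ p : Fin d × Fin d,
        ((X q p).re • Matrix.single q p (1:ℂ)
          + (X q p).im • (Complex.I • Matrix.single q p (1:ℂ)))) a b
        = if q = a then X a b else 0 := by
      intro q
      rw [Matrix.sum_apply]
      have h8 : ∀ p : Fin d × Fin d,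
          (((X q p).re • Matrix.single q p (1:ℂ)
            + (X q p).im • (Complex.I • Matrix.single q p (1:ℂ))) : Mat2 d) a b
          = if q = a ∧ p = b then ((X q p).re + (X q p).im * Complex.I) else 0 := by
        intro p
        simp only [Matrix.add_apply, Matrix.smul_apply, Matrix.single,
          Matrix.of_apply, smul_ite, smul_zero, Complex.real_smul]
        by_cases hqa : q = a ∧ p = b
        · rw [if_pos hqa, if_pos hqa, if_pos hqa]
          simp
        · rw [if_neg hqa, if_neg hqa, if_neg hqa]
          simp
      rw [Finset.sum_congr rfl fun p _ => h8 p]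
      by_cases hqa : q = a
      · subst hqa
        rw [if_pos rfl]
        rw [show (fun p => if q = q ∧ p = b then ((X q p).re + (X q p).im * Complex.I) else 0)
            = fun p => if p = b then ((X q p).re + (X q p).im * Complex.I) else 0 from
          funext fun p => by simp]
        rw [Finset.sum_ite_eq' Finset.univ b]
        simp [Complex.re_add_im]
      · rw [if_neg hqa]
        refine Finset.sum_eq_zero fun p _ => ?_
        rw [if_neg (fun hc => hqa hc.1)]
    rw [Finset.sum_congr rfl fun q _ => hterm q, Finset.sum_ite_eq' Finset.univ a]
    simp
  have hgre : ∀ X : Mat2 d, ((C * X).trace).re = g X := by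
    intro X
    have htr : (C * X).trace = ∑ p, ∑ q, C p q * X q p := by
      simp [Matrix.trace, Matrix.diag_apply, Matrix.mul_apply]
    have hL : ((C * X).trace).re = ∑ p, ∑ q, (C p q * X q p).re := by
      rw [htr, Complex.re_sum]
      exact Finset.sum_congr rfl fun p _ => Complex.re_sum _ _
    have hR : g X = ∑ q, ∑ p, g ((X q p).re • Matrix.single q p (1:ℂ)
        + (X q p).im • (Complex.I • Matrix.single q p (1:ℂ))) := by
      conv_lhs => rw [hdecomp X]
      rw [map_sum]
      exact Finset.sum_congr rfl fun q _ => map_sum g _ _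
    rw [hL, hR, Finset.sum_comm]
    exact Finset.sum_congr rfl fun q _ => Finset.sum_congr rfl fun p _ => hentry p q (X q p)
  set A : Mat2 d := (1/2 : ℝ) • (C + Cᴴ) with hA
  have hAherm : A.IsHermitian := by
    unfold Matrix.IsHermitian
    rw [hA, Matrix.conjTranspose_smul, star_trivial, Matrix.conjTranspose_add,
      Matrix.conjTranspose_conjTranspose, add_comm]
  have hCtr : ∀ X : Mat2 d, X.IsHermitian → (Cᴴ * X).trace = star ((C * X).trace) := by
    intro X hX
    calc (Cᴴ * X).trace = star (star ((Cᴴ * X).trace)) := (star_star _).symm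
    _ = star (((Cᴴ * X)ᴴ).trace) := by rw [Matrix.trace_conjTranspose]
    _ = star ((Xᴴ * C).trace) := by
        rw [Matrix.conjTranspose_mul, Matrix.conjTranspose_conjTranspose]
    _ = star ((X * C).trace) := by rw [show Xᴴ = X from hX]
    _ = star ((C * X).trace) := by rw [Matrix.trace_mul_comm]
  have hAX : ∀ X : Mat2 d, X.IsHermitian → (A * X).trace = ((g X : ℝ) : ℂ) := by
    intro X hX
    rw [hA, Matrix.smul_mul, Matrix.add_mul, Matrix.trace_smul, Matrix.trace_add, hCtr X hX]
    have h9 : (C * X).trace + star ((C * X).trace)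
        = ((2 * ((C * X).trace).re : ℝ) : ℂ) := by
      rw [Complex.star_def, Complex.add_conj]
    rw [h9, hgre X, Complex.real_smul]
    push_cast
    ring
  have hblock : IsKBlockPos k A := by
    intro u v
    have hP : (Matrix.vecMulVec (∑ i, vecTens (u i) (v i))
        (star (∑ i, vecTens (u i) (v i)))) ∈ entGen d k := ⟨u, v, rfl⟩
    have h10 := hAX _ (vecMulVec_isHermitian (∑ i, vecTens (u i) (v i)))
    rw [trace_mul_vecMulVec] at h10
    rw [h10]
    exact Complex.zero_le_real.2 (hgE _ (subset_convexHull ℝ _ hP))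
  have h11 := hB.2 A ⟨hAherm, hblock⟩
  rw [hAX B hB.1] at h11
  have h12 := Complex.zero_le_real.1 h11
  linarith


lemma isKBlockPos_zero (X : Mat2 d) : IsKBlockPos 0 X := by
  intro u v
  have h0 : (∑ i : Fin 0, vecTens (u i) (v i)) = 0 := by simp
  rw [h0]
  simp

/-- inside the real vector space of Hermitian operators on `V ⊗ V`,
the cone of `k`-entangled operators is the dual cone of the cone of `k`-block
positive operators. -/
theorem stmt4 (d : ℕ) (hd : 0 < d) (k : ℕ) :
    {A : Mat2 d | IsKEntangled k A} =
      hermDual {A : Mat2 d | A.IsHermitian ∧ IsKBlockPos k A} := by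
  ext B
  simp only [Set.mem_setOf_eq]
  rw [isKEntangled_iff]
  constructor
  · exact fun h => hull_subset_hermDual h
  · intro hB
    rcases Nat.eq_zero_or_pos k with hk | hk
    · subst hk
      have h1 := hB.2 B ⟨hB.1, isKBlockPos_zero B⟩
      have h2 := hB.2 (-B) ⟨hB.1.neg, isKBlockPos_zero (-B)⟩
      rw [Matrix.neg_mul, Matrix.trace_neg] at h2
      have h3 : (B * B).trace = 0 :=
        le_antisymm (by simpa using neg_nonneg.1 (by simpa using h2)) h1
      have h4 : B = 0 := herm_sq_trace_zero hB.1 h3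
      rw [h4]
      exact subset_convexHull ℝ _ entGen_zero_mem
    · exact hermDual_subset_hull hd hk hB
end

section
/- For every k ∈ ℕ, the cone of k-positive maps on L(V) equals the dual cone of the cone of k-superpositive maps on L(V), taken inside J⁻¹(H(V⊗V)) with respect to the Hilbert–Schmidt inner product of maps. -/
open scoped ComplexOrder Kronecker
open Matrix

variable {n : ℕ}

lemma psd_vecMulVec {ι : Type*} [Fintype ι] [DecidableEq ι] (z : ι → ℂ) :
    (vecMulVec z (star z)).PosSemidef := by
  refine Matrix.PosSemidef.of_dotProduct_mulVec_nonneg ?_ ?_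
  · ext p q
    simp [conjTranspose_apply, vecMulVec_apply, mul_comm]
  · intro x
    have : star x ⬝ᵥ (vecMulVec z (star z)).mulVec x
        = star (∑ q, star (z q) * x q) * (∑ q, star (z q) * x q) := by
      simp only [dotProduct, mulVec, vecMulVec_apply, Pi.star_apply, star_sum, star_mul',
        star_star, Finset.sum_mul, Finset.mul_sum]
      rw [Finset.sum_comm]
      refine Finset.sum_congr rfl fun p _ => Finset.sum_congr rfl fun q _ => by ring
    rw [this]
    exact star_mul_self_nonneg _

lemma conj_sand_entry (X : Mat n) (b d a c : Fin n) :
    (Xᴴ * Matrix.single b d (1:ℂ) * X) a c = star (X b a) * X d c := by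
  rw [Matrix.mul_assoc, Matrix.mul_apply]
  simp only [Matrix.conjTranspose_apply]
  rw [Finset.sum_eq_single b]
  · rw [Matrix.mul_apply]
    rw [Finset.sum_eq_single d]
    · simp [Matrix.single]
    · intro s _ hs
      simp only [Matrix.single, Matrix.of_apply]
      rw [if_neg (by simp [Ne.symm hs]), zero_mul]
    · simp
  · intro r _ hr
    rw [Matrix.mul_apply]
    have : ∀ s, Matrix.single b d (1:ℂ) r s * X s c = 0 := by
      intro s
      simp only [Matrix.single, Matrix.of_apply]
      rw [if_neg (by simp [Ne.symm hr]), zero_mul]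
    simp [this]
  · simp

lemma sum_dite_lt {M : Type*} [AddCommMonoid M] {r k : ℕ} (h : r ≤ k) (F : Fin r → M) :
    ∑ i : Fin k, (if hi : (i : ℕ) < r then F ⟨i, hi⟩ else 0) = ∑ j : Fin r, F j := by
  have e1 := Fin.sum_univ_eq_sum_range (fun i => if hi : i < r then F ⟨i, hi⟩ else 0) k
  have e2 := Fin.sum_univ_eq_sum_range (fun i => if hi : i < r then F ⟨i, hi⟩ else 0) r
  rw [e1]
  have : ∑ j : Fin r, F j = ∑ i ∈ Finset.range r, (fun i => if hi : i < r then F ⟨i, hi⟩ else 0) i := by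
    rw [← e2]; apply Finset.sum_congr rfl; intro j _; simp [j.isLt]
  rw [this]
  exact (Finset.sum_subset (Finset.range_subset_range.2 h)
    (fun x _ hx => dif_neg (by simpa using hx))).symm

lemma rank_factor {k : ℕ} (X : Mat n) (h : X.rank ≤ k) :
    ∃ u v : Fin k → (Fin n → ℂ), ∀ a b, X b a = ∑ i, u i a * v i b := by
  set R := LinearMap.range X.mulVecLin with hR
  have hfr : Module.finrank ℂ R = X.rank := rfl
  let bas : Module.Basis (Fin (Module.finrank ℂ R)) ℂ R := Module.finBasis ℂ R
  let col : Fin n → R := fun a => ⟨X.mulVec (Pi.single a 1), ⟨Pi.single a 1, rfl⟩⟩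
  have hle : Module.finrank ℂ R ≤ k := hfr ▸ h
  refine ⟨fun i a => if hi : (i : ℕ) < Module.finrank ℂ R then bas.repr (col a) ⟨i, hi⟩ else 0,
    fun i b => if hi : (i : ℕ) < Module.finrank ℂ R then (bas ⟨i, hi⟩ : Fin n → ℂ) b else 0,
    fun a b => ?_⟩
  have key : ∑ i : Fin k, (if hi : (i : ℕ) < Module.finrank ℂ R then
      bas.repr (col a) ⟨i, hi⟩ * (bas ⟨i, hi⟩ : Fin n → ℂ) b else 0)
      = ∑ j, bas.repr (col a) j * (bas j : Fin n → ℂ) b :=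
    sum_dite_lt hle (fun j => bas.repr (col a) j * (bas j : Fin n → ℂ) b)
  have step : ∀ i : Fin k,
      (if hi : (i : ℕ) < Module.finrank ℂ R then bas.repr (col a) ⟨i, hi⟩ else 0) *
      (if hi : (i : ℕ) < Module.finrank ℂ R then (bas ⟨i, hi⟩ : Fin n → ℂ) b else 0)
      = (if hi : (i : ℕ) < Module.finrank ℂ R then
          bas.repr (col a) ⟨i, hi⟩ * (bas ⟨i, hi⟩ : Fin n → ℂ) b else 0) := by
    intro i; split_ifs <;> simp
  rw [Finset.sum_congr rfl (fun i _ => step i), key]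
  have hrepr := bas.sum_repr (col a)
  have := congrArg (fun x : R => (x : Fin n → ℂ) b) hrepr
  simp only [Submodule.coe_sum, Finset.sum_apply, SetLike.val_smul, Pi.smul_apply,
    smul_eq_mul] at this
  rw [this]
  show _ = X.mulVec (Pi.single a 1) b
  simp [Matrix.mulVec_single]

lemma phi_apply (Φ : MapV n) (ξ : Mat n) (a c : Fin n) :
    Φ ξ a c = ∑ b, ∑ d, ξ b d * Jmat Φ (a, b) (c, d) := by
  conv_lhs => rw [Matrix.matrix_eq_sum_single ξ]
  rw [map_sum]
  simp only [Matrix.sum_apply]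
  refine Finset.sum_congr rfl fun b _ => ?_
  rw [map_sum]
  simp only [Matrix.sum_apply]
  refine Finset.sum_congr rfl fun d _ => ?_
  have : Matrix.single b d (ξ b d) = ξ b d • Matrix.single b d (1:ℂ) := by
    rw [Matrix.smul_single]; simp
  rw [this, _root_.map_smul]
  simp [Jmat, mul_comm]

lemma sum4 {A B C D M : Type*} [Fintype A] [Fintype B] [Fintype C] [Fintype D]
    [AddCommMonoid M] (f : A → B → C → D → M) :
    ∑ a, ∑ b, ∑ c, ∑ d, f a b c d = ∑ x : A × B × C × D, f x.1 x.2.1 x.2.2.1 x.2.2.2 := by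
  rw [Fintype.sum_prod_type]
  exact Finset.sum_congr rfl fun a _ => by
    rw [Fintype.sum_prod_type]
    exact Finset.sum_congr rfl fun b _ => by rw [Fintype.sum_prod_type]

lemma expand2 {A B M : Type*} [Fintype A] [Fintype B] [AddCommMonoid M]
    (f : (A × A) → (B × B) → M) :
    ∑ p, ∑ q, f p q = ∑ α, ∑ β, ∑ a, ∑ c, f (α, β) (a, c) := by
  rw [Fintype.sum_prod_type]
  exact Finset.sum_congr rfl fun α _ => Finset.sum_congr rfl fun β _ =>
    Fintype.sum_prod_type _

lemma expand2' {A B C D M : Type*} [Fintype A] [Fintype B] [Fintype C] [Fintype D]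
    [AddCommMonoid M] (f : (A × B) → (C × D) → M) :
    ∑ p, ∑ q, f p q = ∑ α, ∑ β, ∑ a, ∑ c, f (α, β) (a, c) := by
  rw [Fintype.sum_prod_type]
  exact Finset.sum_congr rfl fun α _ => Finset.sum_congr rfl fun β _ =>
    Fintype.sum_prod_type _

lemma sum6 {A B C D E F M : Type*} [Fintype A] [Fintype B] [Fintype C] [Fintype D]
    [Fintype E] [Fintype F] [AddCommMonoid M] (f : A → B → C → D → E → F → M) :
    ∑ a, ∑ b, ∑ c, ∑ d, ∑ e, ∑ g, f a b c d e g
      = ∑ x : A × B × C × D × E × F, f x.1 x.2.1 x.2.2.1 x.2.2.2.1 x.2.2.2.2.1 x.2.2.2.2.2 := by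
  rw [Fintype.sum_prod_type]
  refine Finset.sum_congr rfl fun a _ => ?_
  rw [Fintype.sum_prod_type]
  refine Finset.sum_congr rfl fun b _ => ?_
  rw [Fintype.sum_prod_type]
  refine Finset.sum_congr rfl fun c _ => ?_
  rw [Fintype.sum_prod_type]
  refine Finset.sum_congr rfl fun d _ => ?_
  rw [Fintype.sum_prod_type]

lemma hsInner_eq_J (Φ Ψ : MapV n) :
    hsInnerMap Φ Ψ = ∑ p : Fin n × Fin n, ∑ q : Fin n × Fin n,
      star (Jmat Φ p q) * Jmat Ψ p q := by
  have lhs : hsInnerMap Φ Ψ = ∑ α, ∑ β, ∑ a, ∑ c,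
      star (Jmat Φ (c, α) (a, β)) * Jmat Ψ (c, α) (a, β) := by
    unfold hsInnerMap
    refine Finset.sum_congr rfl fun α _ => Finset.sum_congr rfl fun β _ => ?_
    simp [Matrix.trace, Matrix.diag, Matrix.mul_apply, Matrix.conjTranspose_apply, Jmat]
  rw [lhs, sum4, expand2, sum4]
  apply Fintype.sum_equiv
    ⟨fun x => (x.2.2.2, x.1, x.2.2.1, x.2.1), fun x => (x.2.1, x.2.2.2, x.2.2.1, x.1),
      by rintro ⟨a, b, c, d⟩; rfl, by rintro ⟨a, b, c, d⟩; rfl⟩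
  rintro ⟨a, b, c, d⟩; rfl

lemma tid_quad {k : ℕ} (Φ : MapV n) (y z : Fin n × Fin k → ℂ) :
    star y ⬝ᵥ (tensorIdFun k Φ (vecMulVec z (star z))).mulVec y
      = star (fun p : Fin n × Fin n => ∑ i, y (p.1, i) * star (z (p.2, i))) ⬝ᵥ
          (Jmat Φ).mulVec (fun p : Fin n × Fin n => ∑ i, y (p.1, i) * star (z (p.2, i))) := by
  have L1 : star y ⬝ᵥ (tensorIdFun k Φ (vecMulVec z (star z))).mulVec y
      = ∑ a, ∑ i, ∑ c, ∑ j, ∑ b, ∑ d,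
        star (y (a, i)) * z (b, i) * star (z (d, j)) * y (c, j) * Jmat Φ (a, b) (c, d) := by
    have : star y ⬝ᵥ (tensorIdFun k Φ (vecMulVec z (star z))).mulVec y
        = ∑ p, ∑ q, star (y p) * ((tensorIdFun k Φ (vecMulVec z (star z))) p q * y q) := by
      simp [dotProduct, mulVec, Finset.mul_sum]
    rw [this, expand2']
    refine Finset.sum_congr rfl fun a _ => Finset.sum_congr rfl fun i _ =>
      Finset.sum_congr rfl fun c _ => Finset.sum_congr rfl fun j _ => ?_
    rw [show (tensorIdFun k Φ (vecMulVec z (star z))) (a, i) (c, j)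
        = ∑ b, ∑ d, z (b, i) * star (z (d, j)) * Jmat Φ (a, b) (c, d) from by
      show Φ (Matrix.of fun b d => (vecMulVec z (star z)) (b, i) (d, j)) a c = _
      rw [phi_apply]
      exact Finset.sum_congr rfl fun b _ => Finset.sum_congr rfl fun d _ => by
        simp [vecMulVec_apply]]
    rw [Finset.sum_mul, Finset.mul_sum]
    refine Finset.sum_congr rfl fun b _ => ?_
    rw [Finset.sum_mul, Finset.mul_sum]
    exact Finset.sum_congr rfl fun d _ => by ring
  have R1 : star (fun p : Fin n × Fin n => ∑ i, y (p.1, i) * star (z (p.2, i))) ⬝ᵥ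
          (Jmat Φ).mulVec (fun p : Fin n × Fin n => ∑ i, y (p.1, i) * star (z (p.2, i)))
      = ∑ a, ∑ b, ∑ c, ∑ d, ∑ i, ∑ j,
        star (y (a, i)) * z (b, i) * star (z (d, j)) * y (c, j) * Jmat Φ (a, b) (c, d) := by
    have : star (fun p : Fin n × Fin n => ∑ i, y (p.1, i) * star (z (p.2, i))) ⬝ᵥ
          (Jmat Φ).mulVec (fun p : Fin n × Fin n => ∑ i, y (p.1, i) * star (z (p.2, i)))
        = ∑ p, ∑ q, star (∑ i, y (p.1, i) * star (z (p.2, i))) *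
            (Jmat Φ p q * ∑ j, y (q.1, j) * star (z (q.2, j))) := by
      simp [dotProduct, mulVec, Finset.mul_sum]
    rw [this, expand2]
    refine Finset.sum_congr rfl fun a _ => Finset.sum_congr rfl fun b _ =>
      Finset.sum_congr rfl fun c _ => Finset.sum_congr rfl fun d _ => ?_
    rw [star_sum, Finset.sum_mul]
    refine Finset.sum_congr rfl fun i _ => ?_
    rw [Finset.mul_sum, Finset.mul_sum]
    exact Finset.sum_congr rfl fun j _ => by
      simp only [star_mul', star_star]; ring
  rw [L1, R1, sum6, sum6]
  apply Fintype.sum_equiv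
    ⟨fun x => (x.1, x.2.2.2.2.1, x.2.2.1, x.2.2.2.2.2, x.2.1, x.2.2.2.1),
     fun x => (x.1, x.2.2.2.2.1, x.2.2.1, x.2.2.2.2.2, x.2.1, x.2.2.2.1),
     by rintro ⟨a,b,c,d,e,f⟩; rfl, by rintro ⟨a,b,c,d,e,f⟩; rfl⟩
  rintro ⟨a,b,c,d,e,f⟩; rfl

lemma kpos_blockpos {k : ℕ} (Φ : MapV n) (h : IsKPos k Φ) : IsKBlockPos k (Jmat Φ) := by
  intro u v
  set y : Fin n × Fin k → ℂ := fun p => u p.2 p.1 with hy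
  set z : Fin n × Fin k → ℂ := fun p => star (v p.2 p.1) with hz
  have hw : (fun p : Fin n × Fin n => ∑ i, y (p.1, i) * star (z (p.2, i)))
      = ∑ i, vecTens (u i) (v i) := by
    funext p
    simp [hy, hz, vecTens, Finset.sum_apply]
  have h2 := (h _ (psd_vecMulVec z)).dotProduct_mulVec_nonneg y
  rw [tid_quad, hw] at h2
  exact h2

lemma tid_sum {k : ℕ} (Φ : MapV n) {ι : Type*} (s : Finset ι)
    (Ms : ι → Matrix (Fin n × Fin k) (Fin n × Fin k) ℂ) :
    tensorIdFun k Φ (∑ r ∈ s, Ms r) = ∑ r ∈ s, tensorIdFun k Φ (Ms r) := by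
  ext p q
  show Φ (Matrix.of fun a b => (∑ r ∈ s, Ms r) (a, p.2) (b, q.2)) p.1 q.1 = _
  have : (Matrix.of fun a b => (∑ r ∈ s, Ms r) (a, p.2) (b, q.2))
      = ∑ r ∈ s, Matrix.of fun a b => Ms r (a, p.2) (b, q.2) := by
    ext a b; simp [Matrix.sum_apply]
  rw [this, map_sum]
  simp [Matrix.sum_apply, tensorIdFun]

lemma tid_entry {k : ℕ} (Φ : MapV n) (M : Matrix (Fin n × Fin k) (Fin n × Fin k) ℂ)
    (p q : Fin n × Fin k) :
    tensorIdFun k Φ M p q = ∑ b, ∑ d, M (b, p.2) (d, q.2) * Jmat Φ (p.1, b) (q.1, d) := by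
  show Φ (Matrix.of fun a b => M (a, p.2) (b, q.2)) p.1 q.1 = _
  rw [phi_apply]
  rfl

lemma dot_mulVec_sum {ι m : Type*} [Fintype ι] [Fintype m] (s : Finset ι)
    (A : ι → Matrix m m ℂ) (w v : m → ℂ) :
    w ⬝ᵥ (∑ r ∈ s, A r) *ᵥ v = ∑ r ∈ s, w ⬝ᵥ (A r) *ᵥ v := by
  induction s using Finset.cons_induction with
  | empty => simp
  | cons a s ha ih => rw [Finset.sum_cons, Finset.sum_cons, ← ih, Matrix.add_mulVec, dotProduct_add]

lemma blockpos_kpos {k : ℕ} (Φ : MapV n) (hH : (Jmat Φ).IsHermitian)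
    (h : IsKBlockPos k (Jmat Φ)) : IsKPos k Φ := by
  intro M hM
  refine Matrix.PosSemidef.of_dotProduct_mulVec_nonneg ?_ ?_
  · ext p q
    rw [Matrix.conjTranspose_apply, tid_entry, tid_entry]
    rw [star_sum]
    rw [Finset.sum_comm]
    refine Finset.sum_congr rfl fun b _ => ?_
    rw [star_sum]
    refine Finset.sum_congr rfl fun d _ => ?_
    rw [star_mul']
    rw [hM.1.apply, hH.apply]
  · intro x
    open scoped MatrixOrder in obtain ⟨B, hB⟩ := CStarAlgebra.nonneg_iff_eq_star_mul_self.mp hM.nonneg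
    have hMsum : M = ∑ r, vecMulVec (fun p => star (B r p)) (star fun p => star (B r p)) := by
      rw [hB]; ext p q
      simp [Matrix.star_eq_conjTranspose, Matrix.mul_apply, Matrix.sum_apply, vecMulVec_apply, Matrix.conjTranspose_apply]
    rw [hMsum, tid_sum, dot_mulVec_sum]
    refine Finset.sum_nonneg fun r _ => ?_
    have h2 := tid_quad Φ x (fun p => star (B r p))
    rw [h2]
    have hw : (fun p : Fin n × Fin n => ∑ i, x (p.1, i) * star ((fun p => star (B r p)) ((p.2, i) : Fin n × Fin k)))
        = ∑ i, vecTens (fun a => x (a, i)) (fun b => B r (b, i)) := by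
      funext p
      simp [vecTens, Finset.sum_apply]
    rw [hw]
    exact h _ _

noncomputable def conjSand (X : Mat n) : MapV n where
  toFun ξ := Xᴴ * ξ * X
  map_add' ξ η := by simp only [Matrix.mul_add, Matrix.add_mul]
  map_smul' c ξ := by simp only [Matrix.mul_smul, Matrix.smul_mul, RingHom.id_apply]

lemma hsInner_superpos_left (Φ : MapV n) {m : ℕ} (X : Fin m → Mat n)
    (Ψ : MapV n) (hΨ : ∀ ξ, Ψ ξ = ∑ i, (X i)ᴴ * ξ * X i) :
    hsInnerMap Ψ Φ = ∑ i, star (fun p : Fin n × Fin n => star (X i p.2 p.1)) ⬝ᵥ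
        (Jmat Φ).mulVec (fun p : Fin n × Fin n => star (X i p.2 p.1)) := by
  rw [hsInner_eq_J]
  have hJΨ : ∀ p q : Fin n × Fin n, Jmat Ψ p q = ∑ i, star (X i p.2 p.1) * X i q.2 q.1 := by
    intro p q
    show Ψ (Matrix.single p.2 q.2 1) p.1 q.1 = _
    rw [hΨ]
    simp only [Matrix.sum_apply]
    exact Finset.sum_congr rfl fun i _ => conj_sand_entry (X i) p.2 q.2 p.1 q.1
  calc ∑ p : Fin n × Fin n, ∑ q : Fin n × Fin n, star (Jmat Ψ p q) * Jmat Φ p q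
      = ∑ p : Fin n × Fin n, ∑ q : Fin n × Fin n, ∑ i,
          X i p.2 p.1 * (Jmat Φ p q * star (X i q.2 q.1)) := by
        refine Finset.sum_congr rfl fun p _ => Finset.sum_congr rfl fun q _ => ?_
        rw [hJΨ, star_sum, Finset.sum_mul]
        refine Finset.sum_congr rfl fun i _ => ?_
        rw [star_mul', star_star]
        ring
    _ = ∑ p : Fin n × Fin n, ∑ i, ∑ q : Fin n × Fin n,
          X i p.2 p.1 * (Jmat Φ p q * star (X i q.2 q.1)) :=
        Finset.sum_congr rfl fun p _ => Finset.sum_comm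
    _ = ∑ i, ∑ p : Fin n × Fin n, ∑ q : Fin n × Fin n,
          X i p.2 p.1 * (Jmat Φ p q * star (X i q.2 q.1)) := Finset.sum_comm
    _ = _ := by
        refine Finset.sum_congr rfl fun i _ => ?_
        have hR : star (fun p : Fin n × Fin n => star (X i p.2 p.1)) ⬝ᵥ
            (Jmat Φ).mulVec (fun p : Fin n × Fin n => star (X i p.2 p.1))
            = ∑ p : Fin n × Fin n, ∑ q : Fin n × Fin n,
              X i p.2 p.1 * (Jmat Φ p q * star (X i q.2 q.1)) := by
          simp [dotProduct, mulVec, Finset.mul_sum]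
        rw [hR]

lemma conjSand_Jmat (X : Mat n) (p q : Fin n × Fin n) :
    Jmat (conjSand X) p q = star (X p.2 p.1) * X q.2 q.1 :=
  conj_sand_entry X p.2 q.2 p.1 q.1

/-- inside `J⁻¹(H(V⊗V))`, the cone of `k`-positive maps is the dual
cone of the cone of `k`-superpositive maps, with respect to the Hilbert–Schmidt
inner product of maps. -/
theorem stmt5 (d : ℕ) (hd : 0 < d) (k : ℕ) :
    {Φ : MapV d | InJinvH Φ ∧ IsKPos k Φ} =
      mapDual {Φ : MapV d | InJinvH Φ ∧ IsKSuperPos k Φ} := by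
  ext Φ
  simp only [Set.mem_setOf_eq, mapDual]
  constructor
  · rintro ⟨hH, hP⟩
    refine ⟨hH, ?_⟩
    rintro Ψ ⟨hΨH, m, X, hrank, hXeq⟩
    rw [hsInner_superpos_left Φ X Ψ hXeq]
    refine Finset.sum_nonneg fun i _ => ?_
    obtain ⟨u, v, huv⟩ := rank_factor (X i) (hrank i)
    have hw : (fun p : Fin d × Fin d => star (X i p.2 p.1))
        = ∑ j, vecTens (fun a => star (u j a)) (fun b => star (v j b)) := by
      funext p
      rw [huv p.1 p.2, star_sum]
      simp only [vecTens, Finset.sum_apply]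
      exact Finset.sum_congr rfl fun j _ => by rw [star_mul']
    rw [hw]
    exact kpos_blockpos Φ hP _ _
  · rintro ⟨hH, hD⟩
    refine ⟨hH, blockpos_kpos Φ hH ?_⟩
    intro u v
    set w : Fin d × Fin d → ℂ := ∑ i, vecTens (u i) (v i) with hwdef
    set X : Mat d := Matrix.of fun b a => star (w (a, b)) with hX
    have hrank : X.rank ≤ k := by
      have hfac : X = (Matrix.of fun (b : Fin d) (i : Fin k) => star (v i b)) *
          (Matrix.of fun (i : Fin k) (a : Fin d) => star (u i a)) := by
        ext b a
        simp only [hX, hwdef, Matrix.of_apply, Matrix.mul_apply, Finset.sum_apply,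
          vecTens, star_sum, star_mul']
        exact Finset.sum_congr rfl fun j _ => by ring
      calc X.rank ≤ (Matrix.of fun (b : Fin d) (i : Fin k) => star (v i b)).rank := by
            rw [hfac]; exact Matrix.rank_mul_le_left _ _
        _ ≤ Fintype.card (Fin k) := Matrix.rank_le_card_width _
        _ = k := Fintype.card_fin k
    have hXeq : ∀ ξ, (conjSand X) ξ = ∑ _i : Fin 1, Xᴴ * ξ * X := fun ξ => by
      simp [conjSand]
    have hsp : IsKSuperPos k (conjSand X) := ⟨1, fun _ => X, fun _ => hrank, hXeq⟩
    have hherm : InJinvH (conjSand X) := by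
      show (Jmat (conjSand X)).IsHermitian
      ext p q
      rw [Matrix.conjTranspose_apply, conjSand_Jmat, conjSand_Jmat]
      rw [star_mul', star_star]
      ring
    have h0 := hD (conjSand X) ⟨hherm, hsp⟩
    rw [hsInner_superpos_left Φ (fun _ : Fin 1 => X) (conjSand X) hXeq, Fin.sum_univ_one] at h0
    have hwX : (fun p : Fin d × Fin d => star (X p.2 p.1)) = w := by
      funext p; simp [hX]
    rw [hwX] at h0
    exact h0
end

section
/- Let Ψ be a k-positive linear map on L(V) and let u_1,…,u_k ∈ V. Then there exist m ∈ ℕ and vectors w_l^{(n)} ∈ V (l = 1,…,k, n = 1,…,m) such that Ψ(|u_i⟩⟨u_j|) = Σ_{n=1}^m |w_i^{(n)}⟩⟨w_j^{(n)}| for all i, j ∈ {1,…,k}. -/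
open scoped ComplexOrder Kronecker
open Matrix

variable {n : ℕ}

/-- if `Ψ` is `k`-positive and `u_1, …, u_k ∈ V`, then there are
`m ∈ ℕ` and vectors `w_l^{(n)}` with
`Ψ(|u_i⟩⟨u_j|) = Σ_{n=1}^m |w_i^{(n)}⟩⟨w_j^{(n)}|` for all `i, j`. -/
theorem stmt8 (d : ℕ) (hd : 0 < d) (k : ℕ) (Ψ : MapV d) (hΨ : IsKPos k Ψ)
    (u : Fin k → (Fin d → ℂ)) :
    ∃ (m : ℕ) (w : Fin k → Fin m → (Fin d → ℂ)),
      ∀ i j : Fin k, Ψ (Matrix.vecMulVec (u i) (star (u j))) =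
        ∑ t : Fin m, Matrix.vecMulVec (w i t) (star (w j t)) := by
    classical
  set M : Matrix (Fin d × Fin k) (Fin d × Fin k) ℂ :=
    Matrix.of (fun p q => u p.2 p.1 * star (u q.2 q.1)) with hM
  have hMpsd : M.PosSemidef := by
    have hMeq : M = (Matrix.of fun (_ : Fin 1) (p : Fin d × Fin k) =>
        star (u p.2 p.1))ᴴ * (Matrix.of fun (_ : Fin 1) p => star (u p.2 p.1)) := by
      ext p q
      simp [hM, Matrix.mul_apply, Fin.sum_univ_one, mul_comm]
    rw [hMeq]
    exact Matrix.posSemidef_conjTranspose_mul_self _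
  obtain ⟨B, hB⟩ : ∃ B : Matrix (Fin d × Fin k) (Fin d × Fin k) ℂ,
      tensorIdFun k Ψ M = Bᴴ * B := by
    open scoped MatrixOrder in
    exact ⟨CFC.sqrt (tensorIdFun k Ψ M), by
      have h0 : 0 ≤ tensorIdFun k Ψ M := (hΨ M hMpsd).nonneg
      have hs : (CFC.sqrt (tensorIdFun k Ψ M))ᴴ = CFC.sqrt (tensorIdFun k Ψ M) :=
        (CFC.sqrt_nonneg (tensorIdFun k Ψ M)).isSelfAdjoint.star_eq
      rw [hs, CFC.sqrt_mul_sqrt_self _ h0]⟩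
  refine ⟨d * k, fun i t a => star (B (finProdFinEquiv.symm t) (a, i)), fun i j => ?_⟩
  have key : tensorIdFun k Ψ M = Bᴴ * B := hB
  ext p q
  have h1 : Ψ (Matrix.vecMulVec (u i) (star (u j))) p q = (Bᴴ * B) ((p, i)) ((q, j)) := by
    rw [← key]
    have : (Matrix.of fun a b => M (a, i) (b, j)) = Matrix.vecMulVec (u i) (star (u j)) := by
      ext a b
      simp [hM, Matrix.vecMulVec_apply]
    simpa [tensorIdFun, this] using rfl
  rw [h1]
  rw [Matrix.mul_apply]
  rw [← Equiv.sum_comp finProdFinEquiv.symm (fun s => Bᴴ ((p,i)) s * B s ((q,j)))]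
  simp [Matrix.sum_apply, Matrix.vecMulVec_apply, Matrix.conjTranspose_apply, mul_comm]
end

section
/- Let k ∈ ℕ. If Φ is a k-superpositive linear map on L(V) and Ψ is a k-positive linear map on L(V), then both compositions Φ∘Ψ and Ψ∘Φ are k-superpositive. -/
open scoped ComplexOrder Kronecker
open Matrix

variable {n : ℕ}

section Helpers


lemma herm_of_nonneg {m : Type*} [Fintype m] [DecidableEq m] (M : Matrix m m ℂ)
    (h : ∀ x : m → ℂ, 0 ≤ star x ⬝ᵥ M *ᵥ x) : M.IsHermitian := by
  have real : ∀ z : m → ℂ, ∃ r : ℝ, star z ⬝ᵥ M *ᵥ z = (r : ℂ) := by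
    intro z
    have h0 := h z
    rw [Complex.nonneg_iff] at h0
    refine ⟨(star z ⬝ᵥ M *ᵥ z).re, ?_⟩
    apply Complex.ext
    · simp
    · simp [← h0.2]
  have key : ∀ x y : m → ℂ, (starRingEnd ℂ) (star x ⬝ᵥ M *ᵥ y) = star y ⬝ᵥ M *ᵥ x := by
    intro x y
    obtain ⟨r1, h1⟩ := real (x + y)
    obtain ⟨r2, h2⟩ := real (x + Complex.I • y)
    obtain ⟨r3, h3⟩ := real x
    obtain ⟨r4, h4⟩ := real y
    set Bxy := star x ⬝ᵥ M *ᵥ y with hBxy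
    set Byx := star y ⬝ᵥ M *ᵥ x with hByx
    set Bxx := star x ⬝ᵥ M *ᵥ x with hBxx
    set Byy := star y ⬝ᵥ M *ᵥ y with hByy
    simp only [star_add, star_smul, mulVec_add, mulVec_smul, add_dotProduct,
      dotProduct_add, smul_dotProduct, dotProduct_smul, smul_eq_mul,
      Complex.star_def, Complex.conj_I, ← hBxy, ← hByx, ← hBxx, ← hByy] at h1 h2
    have e1 : Bxy + Byx = (r1 : ℂ) - r3 - r4 := by linear_combination h1 - h3 - h4
    have h2' : Bxx + Byy + Complex.I * Bxy - Complex.I * Byx = (r2 : ℂ) := by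
      linear_combination h2 + Byy * Complex.I_mul_I
    have e2 : Bxy - Byx = -Complex.I * ((r2 : ℂ) - r3 - r4) := by
      linear_combination (-Complex.I) * (h2' - h3 - h4) + (Bxy - Byx) * Complex.I_mul_I
    have hx2 : Bxy = ((r1 : ℂ) - r3 - r4 - Complex.I * ((r2:ℂ) - r3 - r4)) / 2 := by
      linear_combination (e1 + e2) / 2
    have hy2 : Byx = ((r1 : ℂ) - r3 - r4 + Complex.I * ((r2:ℂ) - r3 - r4)) / 2 := by
      linear_combination (e1 - e2) / 2
    rw [hx2, hy2]
    simp only [map_div₀, map_sub, map_add, _root_.map_mul, Complex.conj_I, Complex.conj_ofReal,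
      map_ofNat]
    ring
  ext i j
  have := key (Pi.single j 1) (Pi.single i 1)
  simpa [conjTranspose_apply, dotProduct, Pi.single_apply, Pi.star_apply, apply_ite,
    mulVec, Finset.mul_sum] using this

lemma stdBM_smul {p q : ℕ} (b : Fin p) (e : Fin q) (c : ℂ) :
    Matrix.single b e c = c • Matrix.single b e 1 := by
  rw [smul_single, smul_eq_mul, mul_one]

/-- sandwich decomposition -/
lemma sandwich {k d : ℕ} (W : Matrix (Fin k) (Fin d) ℂ) (η : Matrix (Fin k) (Fin k) ℂ) :
    Wᴴ * η * W = ∑ b : Fin k, ∑ e : Fin k,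
      η b e • (Wᴴ * Matrix.single b e (1:ℂ) * W) := by
  conv_lhs => rw [matrix_eq_sum_single η]
  simp only [Matrix.mul_sum, Matrix.sum_mul]
  refine Finset.sum_congr rfl fun b _ => Finset.sum_congr rfl fun e _ => ?_
  rw [stdBM_smul b e (η b e), Matrix.mul_smul, Matrix.smul_mul]


lemma exists_CB {d k : ℕ} (X : Matrix (Fin d) (Fin d) ℂ) (hX : X.rank ≤ k) :
    ∃ (C : Matrix (Fin d) (Fin k) ℂ) (B : Matrix (Fin k) (Fin d) ℂ), X = C * B := by
  classical
  set R := LinearMap.range X.mulVecLin with hR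
  have hfr : Module.finrank ℂ ↥R = X.rank := rfl
  let b : Module.Basis (Fin X.rank) ℂ ↥R := Module.finBasisOfFinrankEq ℂ ↥R hfr
  have hmem : ∀ y, X *ᵥ Pi.single y 1 ∈ R := fun y => ⟨Pi.single y 1, rfl⟩
  let C0 : Matrix (Fin d) (Fin X.rank) ℂ := Matrix.of fun x i => (b i : Fin d → ℂ) x
  let B0 : Matrix (Fin X.rank) (Fin d) ℂ :=
    Matrix.of fun i y => b.repr ⟨X *ᵥ Pi.single y 1, hmem y⟩ i
  have hX0 : X = C0 * B0 := by
    ext x y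
    have hrepr := b.sum_repr ⟨X *ᵥ Pi.single y 1, hmem y⟩
    have := congrArg (fun (v : ↥R) => (v : Fin d → ℂ) x) hrepr
    simp only [Submodule.coe_sum, Submodule.coe_smul, Finset.sum_apply, Pi.smul_apply,
      smul_eq_mul] at this
    calc X x y = (X *ᵥ Pi.single y 1) x := by simp
    _ = ∑ i, b.repr ⟨X *ᵥ Pi.single y 1, hmem y⟩ i * (b i : Fin d → ℂ) x := this.symm
    _ = (C0 * B0) x y := by
        simp only [Matrix.mul_apply, C0, B0, Matrix.of_apply]
        exact Finset.sum_congr rfl fun i _ => mul_comm _ _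
  let E : Matrix (Fin X.rank) (Fin k) ℂ := Matrix.of fun i j => if Fin.castLE hX i = j then 1 else 0
  let F : Matrix (Fin k) (Fin X.rank) ℂ := Matrix.of fun j i => if j = Fin.castLE hX i then 1 else 0
  have hEF : E * F = (1 : Matrix (Fin X.rank) (Fin X.rank) ℂ) := by
    ext i i'
    simp [E, F, Matrix.mul_apply, Matrix.one_apply, ite_and, Fin.castLE_inj]
  refine ⟨C0 * E, F * B0, ?_⟩
  rw [Matrix.mul_assoc, ← Matrix.mul_assoc E F, hEF, Matrix.one_mul, ← hX0]

lemma expandPsi {d : ℕ} (Ψ : MapV d) (N : Mat d) :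
    Ψ N = ∑ α, ∑ β, N α β • Ψ (Matrix.single α β (1:ℂ)) := by
  conv_lhs => rw [matrix_eq_sum_single N]
  rw [map_sum]
  refine Finset.sum_congr rfl fun α _ => ?_
  rw [map_sum]
  refine Finset.sum_congr rfl fun β _ => ?_
  rw [stdBM_smul, _root_.map_smul]

lemma coreA {d k : ℕ} (Ψ : MapV d) (hΨ : IsKPos k Ψ) (X : Mat d) (hX : X.rank ≤ k) :
    ∃ K : Fin d × Fin k → Mat d, (∀ j, (K j).rank ≤ k) ∧
      ∀ ξ, Ψ (Xᴴ * ξ * X) = ∑ j, (K j)ᴴ * ξ * K j := by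
  classical
  obtain ⟨C, B, hCB⟩ := exists_CB X hX
  set S : Matrix (Fin 1) (Fin d × Fin k) ℂ := Matrix.of fun _ p => B p.2 p.1 with hS
  set M := Sᴴ * S with hMdef
  have hM : M.PosSemidef := Matrix.posSemidef_conjTranspose_mul_self S
  have hMapp : ∀ p q, M p q = star (B p.2 p.1) * B q.2 q.1 := by
    intro p q
    simp [hMdef, Matrix.mul_apply, hS, Matrix.conjTranspose_apply]
  obtain ⟨A, hA⟩ : ∃ A, tensorIdFun k Ψ M = Aᴴ * A := by
    open scoped MatrixOrder in
    obtain ⟨A, hA⟩ := CStarAlgebra.nonneg_iff_eq_star_mul_self.mp (hΨ M hM).nonneg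
    exact ⟨A, hA⟩
  set Y : Fin d × Fin k → Matrix (Fin k) (Fin d) ℂ :=
    fun j => Matrix.of fun b a => A j (a, b) with hY
  have hPapp : ∀ p q, tensorIdFun k Ψ M p q = ∑ j, star (A j p) * A j q := by
    intro p q
    rw [hA]
    simp [Matrix.mul_apply, Matrix.conjTranspose_apply]
  have step1 : ∀ b e : Fin k, Ψ (Bᴴ * Matrix.single b e (1:ℂ) * B)
      = ∑ j, (Y j)ᴴ * Matrix.single b e (1:ℂ) * Y j := by
    intro b e
    have hL : Bᴴ * Matrix.single b e (1:ℂ) * B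
        = Matrix.of fun x y => M (x, b) (y, e) := by
      ext x y
      simp [Matrix.mul_apply, Matrix.single, Matrix.conjTranspose_apply, ite_and,
        mul_ite, ite_mul, mul_one, mul_zero, zero_mul, Finset.sum_ite_eq, hMapp]
    rw [hL]
    ext a c
    have hent : Ψ (Matrix.of fun x y => M (x, b) (y, e)) a c
        = tensorIdFun k Ψ M (a, b) (c, e) := rfl
    rw [hent, hPapp]
    rw [Matrix.sum_apply]
    refine Finset.sum_congr rfl fun j _ => ?_
    simp [Matrix.mul_apply, Matrix.single, hY, ite_and, mul_ite, ite_mul,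
      mul_one, mul_zero, zero_mul, Finset.sum_ite_eq, Matrix.conjTranspose_apply]
  have keyP : ∀ η : Matrix (Fin k) (Fin k) ℂ,
      Ψ (Bᴴ * η * B) = ∑ j, (Y j)ᴴ * η * Y j := by
    intro η
    rw [sandwich B η, map_sum]
    calc ∑ b, Ψ (∑ e, η b e • (Bᴴ * Matrix.single b e (1:ℂ) * B))
        = ∑ b, ∑ e, ∑ j, η b e • ((Y j)ᴴ * Matrix.single b e (1:ℂ) * Y j) := by
          refine Finset.sum_congr rfl fun b _ => ?_
          rw [map_sum]
          refine Finset.sum_congr rfl fun e _ => ?_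
          rw [_root_.map_smul, step1, Finset.smul_sum]
      _ = ∑ j, ∑ b, ∑ e, η b e • ((Y j)ᴴ * Matrix.single b e (1:ℂ) * Y j) := by
          have h1 : ∀ b : Fin k,
              (∑ e, ∑ j, η b e • ((Y j)ᴴ * Matrix.single b e (1:ℂ) * Y j))
              = ∑ j, ∑ e, η b e • ((Y j)ᴴ * Matrix.single b e (1:ℂ) * Y j) :=
            fun b => Finset.sum_comm
          simp_rw [h1]
          exact Finset.sum_comm
      _ = ∑ j, (Y j)ᴴ * η * Y j :=
          Finset.sum_congr rfl fun j _ => (sandwich (Y j) η).symm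
  refine ⟨fun j => C * Y j, fun j => (Matrix.rank_mul_le_left C (Y j)).trans
    (Matrix.rank_le_width C), fun ξ => ?_⟩
  calc Ψ (Xᴴ * ξ * X) = Ψ (Bᴴ * (Cᴴ * ξ * C) * B) := by
        rw [hCB]; congr 1; rw [Matrix.conjTranspose_mul]; simp only [Matrix.mul_assoc]
    _ = ∑ j, (Y j)ᴴ * (Cᴴ * ξ * C) * Y j := keyP _
    _ = ∑ j, (C * Y j)ᴴ * ξ * (C * Y j) := by
        refine Finset.sum_congr rfl fun j _ => ?_
        rw [Matrix.conjTranspose_mul]; simp only [Matrix.mul_assoc]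

lemma dotExpand {ι : Type*} [Fintype ι] (U : Matrix ι ι ℂ) (v : ι → ℂ) :
    star v ⬝ᵥ U *ᵥ v = ∑ p, ∑ q, star (v p) * (U p q * v q) := by
  simp [dotProduct, mulVec, Finset.mul_sum, Pi.star_apply]

lemma coreB {d k : ℕ} (Ψ : MapV d) (hΨ : IsKPos k Ψ) (X : Mat d) (hX : X.rank ≤ k) :
    ∃ K : Fin k × Fin d → Mat d, (∀ j, (K j).rank ≤ k) ∧
      ∀ ξ, Xᴴ * Ψ ξ * X = ∑ j, (K j)ᴴ * ξ * K j := by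
  classical
  obtain ⟨C, B, hCB⟩ := exists_CB X hX
  set P' : Matrix (Fin k × Fin d) (Fin k × Fin d) ℂ :=
    Matrix.of (fun p q => (Cᴴ * Ψ (Matrix.single p.2 q.2 (1:ℂ)) * C) p.1 q.1) with hP'
  have hP'app : ∀ b e : Fin k, ∀ α β : Fin d,
      P' (b, α) (e, β) = (Cᴴ * Ψ (Matrix.single α β (1:ℂ)) * C) b e := fun _ _ _ _ => rfl
  have hform : ∀ z : Fin k × Fin d → ℂ, 0 ≤ star z ⬝ᵥ P' *ᵥ z := by
    intro z
    set Zc : Matrix (Fin k) (Fin d) ℂ := Matrix.of fun b α => z (b, α) with hZc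
    set S : Matrix (Fin 1) (Fin d × Fin k) ℂ := Matrix.of fun _ p => Zc p.2 p.1 with hS
    set N := Sᴴ * S with hN
    have hNps : N.PosSemidef := Matrix.posSemidef_conjTranspose_mul_self S
    have hNapp : ∀ p q, N p q = star (z (p.2, p.1)) * z (q.2, q.1) := by
      intro p q
      simp [hN, Matrix.mul_apply, hS, Matrix.conjTranspose_apply, hZc]
    have hZent : ∀ (b e : Fin k) (α β : Fin d),
        (Zcᴴ * Matrix.single b e (1:ℂ) * Zc) α β = star (z (b, α)) * z (e, β) := by
      intro b e α β
      simp [Matrix.mul_apply, Matrix.single, Matrix.conjTranspose_apply, ite_and,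
        mul_ite, ite_mul, mul_one, mul_zero, zero_mul, Finset.sum_ite_eq, hZc]
    have hG := hΨ N hNps
    have hslice : ∀ b e : Fin k, (Matrix.of fun α β => N (α, b) (β, e))
        = Zcᴴ * Matrix.single b e (1:ℂ) * Zc := by
      intro b e
      ext α β
      rw [Matrix.of_apply, hNapp, hZent]
    have hpsi_expand : ∀ b e : Fin k, Ψ (Zcᴴ * Matrix.single b e (1:ℂ) * Zc)
        = ∑ α, ∑ β, (star (z (b, α)) * z (e, β)) • Ψ (Matrix.single α β (1:ℂ)) := by
      intro b e
      rw [expandPsi Ψ _]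
      exact Finset.sum_congr rfl fun α _ => Finset.sum_congr rfl fun β _ => by rw [hZent]
    have hcontract : ∀ (Q : Mat d) (b e : Fin k),
        (∑ x, ∑ y, star (C x b) * (Q x y * C y e)) = (Cᴴ * Q * C) b e := by
      intro Q b e
      rw [Finset.sum_comm]
      simp only [Matrix.mul_apply, Matrix.conjTranspose_apply, Finset.sum_mul]
      exact Finset.sum_congr rfl fun y _ => Finset.sum_congr rfl fun x _ => by ring
    set T : ℂ := ∑ b, ∑ e, (Cᴴ * Ψ (Zcᴴ * Matrix.single b e (1:ℂ) * Zc) * C) b e with hT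
    have claim1 : star z ⬝ᵥ P' *ᵥ z = T := by
      calc star z ⬝ᵥ P' *ᵥ z
          = ∑ p : Fin k × Fin d, ∑ q : Fin k × Fin d, star (z p) * (P' p q * z q) :=
            dotExpand _ _
        _ = ∑ b, ∑ α, ∑ e, ∑ β, star (z (b, α)) *
              ((Cᴴ * Ψ (Matrix.single α β (1:ℂ)) * C) b e * z (e, β)) := by
            rw [Fintype.sum_prod_type]
            refine Finset.sum_congr rfl fun b _ => Finset.sum_congr rfl fun α _ => ?_
            rw [Fintype.sum_prod_type]
            exact Finset.sum_congr rfl fun e _ => Finset.sum_congr rfl fun β _ => by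
              rw [hP'app]
        _ = ∑ b, ∑ e, ∑ α, ∑ β, star (z (b, α)) *
              ((Cᴴ * Ψ (Matrix.single α β (1:ℂ)) * C) b e * z (e, β)) :=
            Finset.sum_congr rfl fun b _ => Finset.sum_comm
        _ = T := by
            rw [hT]
            refine Finset.sum_congr rfl fun b _ => Finset.sum_congr rfl fun e _ => ?_
            rw [hpsi_expand]
            simp only [Matrix.mul_sum, Matrix.sum_mul, Matrix.mul_smul, Matrix.smul_mul,
              Matrix.sum_apply, Matrix.smul_apply, smul_eq_mul]
            exact Finset.sum_congr rfl fun α _ => Finset.sum_congr rfl fun β _ => by ring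
    have claim2 : star (fun p : Fin d × Fin k => C p.1 p.2) ⬝ᵥ
        (tensorIdFun k Ψ N) *ᵥ (fun p : Fin d × Fin k => C p.1 p.2) = T := by
      calc star (fun p : Fin d × Fin k => C p.1 p.2) ⬝ᵥ
            (tensorIdFun k Ψ N) *ᵥ (fun p : Fin d × Fin k => C p.1 p.2)
          = ∑ p : Fin d × Fin k, ∑ q : Fin d × Fin k,
              star (C p.1 p.2) * (tensorIdFun k Ψ N p q * C q.1 q.2) := dotExpand _ _
        _ = ∑ x, ∑ b, ∑ y, ∑ e, star (C x b) *
              (Ψ (Zcᴴ * Matrix.single b e (1:ℂ) * Zc) x y * C y e) := by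
            rw [Fintype.sum_prod_type]
            refine Finset.sum_congr rfl fun x _ => Finset.sum_congr rfl fun b _ => ?_
            rw [Fintype.sum_prod_type]
            refine Finset.sum_congr rfl fun y _ => Finset.sum_congr rfl fun e _ => ?_
            rw [show tensorIdFun k Ψ N (x, b) (y, e)
              = Ψ (Matrix.of fun α β => N (α, b) (β, e)) x y from rfl, hslice]
        _ = ∑ b, ∑ x, ∑ y, ∑ e, star (C x b) *
              (Ψ (Zcᴴ * Matrix.single b e (1:ℂ) * Zc) x y * C y e) := Finset.sum_comm
        _ = ∑ b, ∑ x, ∑ e, ∑ y, star (C x b) *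
              (Ψ (Zcᴴ * Matrix.single b e (1:ℂ) * Zc) x y * C y e) :=
            Finset.sum_congr rfl fun b _ => Finset.sum_congr rfl fun x _ => Finset.sum_comm
        _ = ∑ b, ∑ e, ∑ x, ∑ y, star (C x b) *
              (Ψ (Zcᴴ * Matrix.single b e (1:ℂ) * Zc) x y * C y e) :=
            Finset.sum_congr rfl fun b _ => Finset.sum_comm
        _ = T := by
            rw [hT]
            exact Finset.sum_congr rfl fun b _ => Finset.sum_congr rfl fun e _ =>
              hcontract _ b e
    rw [claim1, ← claim2]
    exact hG.dotProduct_mulVec_nonneg _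
  have hP'ps : P'.PosSemidef :=
    Matrix.PosSemidef.of_dotProduct_mulVec_nonneg (herm_of_nonneg P' hform) hform
  obtain ⟨A, hA⟩ : ∃ A, P' = Aᴴ * A := by
    open scoped MatrixOrder in
    obtain ⟨A, hA⟩ := CStarAlgebra.nonneg_iff_eq_star_mul_self.mp hP'ps.nonneg
    exact ⟨A, hA⟩
  set W : Fin k × Fin d → Matrix (Fin d) (Fin k) ℂ :=
    fun j => Matrix.of fun α b => A j (b, α) with hW
  have hPapp : ∀ p q, P' p q = ∑ j, star (A j p) * A j q := by
    intro p q
    rw [hA]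
    simp [Matrix.mul_apply, Matrix.conjTranspose_apply]
  have step1 : ∀ α β : Fin d, Cᴴ * Ψ (Matrix.single α β (1:ℂ)) * C
      = ∑ j, (W j)ᴴ * Matrix.single α β (1:ℂ) * W j := by
    intro α β
    ext b e
    rw [← hP'app b e α β, hPapp, Matrix.sum_apply]
    refine Finset.sum_congr rfl fun j _ => ?_
    simp [Matrix.mul_apply, Matrix.single, hW, ite_and, mul_ite, ite_mul,
      mul_one, mul_zero, zero_mul, Finset.sum_ite_eq, Matrix.conjTranspose_apply]
  have keyP : ∀ ξ : Mat d, Cᴴ * Ψ ξ * C = ∑ j, (W j)ᴴ * ξ * W j := by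
    intro ξ
    calc Cᴴ * Ψ ξ * C
        = ∑ α, ∑ β, ξ α β • (Cᴴ * Ψ (Matrix.single α β (1:ℂ)) * C) := by
          rw [expandPsi Ψ ξ]
          simp only [Matrix.mul_sum, Matrix.sum_mul, Matrix.mul_smul, Matrix.smul_mul]
      _ = ∑ α, ∑ β, ∑ j, ξ α β • ((W j)ᴴ * Matrix.single α β (1:ℂ) * W j) := by
          simp_rw [step1, Finset.smul_sum]
      _ = ∑ j, ∑ α, ∑ β, ξ α β • ((W j)ᴴ * Matrix.single α β (1:ℂ) * W j) := by
          have h1 : ∀ α : Fin d,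
              (∑ β, ∑ j, ξ α β • ((W j)ᴴ * Matrix.single α β (1:ℂ) * W j))
              = ∑ j, ∑ β, ξ α β • ((W j)ᴴ * Matrix.single α β (1:ℂ) * W j) :=
            fun α => Finset.sum_comm
          simp_rw [h1]
          exact Finset.sum_comm
      _ = ∑ j, (W j)ᴴ * ξ * W j :=
          Finset.sum_congr rfl fun j _ => (sandwich (W j) ξ).symm
  refine ⟨fun j => W j * B, fun j => (Matrix.rank_mul_le_left (W j) B).trans
    (Matrix.rank_le_width (W j)), fun ξ => ?_⟩
  calc Xᴴ * Ψ ξ * X = Bᴴ * (Cᴴ * Ψ ξ * C) * B := by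
        rw [hCB]; rw [Matrix.conjTranspose_mul]; simp only [Matrix.mul_assoc]
    _ = Bᴴ * (∑ j, (W j)ᴴ * ξ * W j) * B := by rw [keyP]
    _ = ∑ j, (W j * B)ᴴ * ξ * (W j * B) := by
        simp only [Matrix.mul_sum, Matrix.sum_mul, Matrix.conjTranspose_mul, Matrix.mul_assoc]


lemma isKSuperPos_of_family {d k : ℕ} (Θ : MapV d) {ι : Type} [Fintype ι]
    (K : ι → Mat d) (hrk : ∀ j, (K j).rank ≤ k)
    (hdec : ∀ ξ, Θ ξ = ∑ j, (K j)ᴴ * ξ * K j) : IsKSuperPos k Θ := by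
  refine ⟨Fintype.card ι, fun t => K ((Fintype.equivFin ι).symm t), fun t => hrk _, fun ξ => ?_⟩
  rw [hdec]
  exact Fintype.sum_equiv (Fintype.equivFin ι) _ _ (fun j => by simp)

end Helpers

/-- if `Φ` is `k`-superpositive and `Ψ` is `k`-positive, then both
`Φ ∘ Ψ` and `Ψ ∘ Φ` are `k`-superpositive. -/
theorem stmt9 (d : ℕ) (hd : 0 < d) (k : ℕ) (Φ Ψ : MapV d)
    (hΦ : IsKSuperPos k Φ) (hΨ : IsKPos k Ψ) :
    IsKSuperPos k (Φ ∘ₗ Ψ) ∧ IsKSuperPos k (Ψ ∘ₗ Φ) := by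
  obtain ⟨m, X, hrkX, hdecX⟩ := hΦ
  constructor
  · choose K hrk hdec using fun i => coreB Ψ hΨ (X i) (hrkX i)
    refine isKSuperPos_of_family _ (fun p : Fin m × (Fin k × Fin d) => K p.1 p.2)
      (fun p => hrk p.1 p.2) (fun ξ => ?_)
    calc (Φ ∘ₗ Ψ) ξ = ∑ i, (X i)ᴴ * Ψ ξ * X i := by
          rw [LinearMap.comp_apply, hdecX]
      _ = ∑ i, ∑ j, (K i j)ᴴ * ξ * K i j := Finset.sum_congr rfl fun i _ => hdec i ξ
      _ = ∑ p : Fin m × (Fin k × Fin d), (K p.1 p.2)ᴴ * ξ * K p.1 p.2 := by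
          rw [Fintype.sum_prod_type]
  · choose K hrk hdec using fun i => coreA Ψ hΨ (X i) (hrkX i)
    refine isKSuperPos_of_family _ (fun p : Fin m × (Fin d × Fin k) => K p.1 p.2)
      (fun p => hrk p.1 p.2) (fun ξ => ?_)
    calc (Ψ ∘ₗ Φ) ξ = ∑ i, Ψ ((X i)ᴴ * ξ * X i) := by
          rw [LinearMap.comp_apply, hdecX, map_sum]
      _ = ∑ i, ∑ j, (K i j)ᴴ * ξ * K i j := Finset.sum_congr rfl fun i _ => hdec i ξ
      _ = ∑ p : Fin m × (Fin d × Fin k), (K p.1 p.2)ᴴ * ξ * K p.1 p.2 := by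
          rw [Fintype.sum_prod_type]
end
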